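/- arXiv:0805.0775 — 7 statements merged into one kernel-verified Lean document; each statement's English description precedes it below -/
import Mathlib

section
/- Fix a positive odd integer h and an integer r, and for an integer t and an odd positive integer n let c_t(n) = Σ_{α mod n, gcd(t²−α,n)=1, α ≡ r mod gcd(n,h)} (α|n), where (α|n) is the Jacobi symbol. Then c_t is multiplicative on odd arguments: for all coprime odd positive integers m and n, c_t(mn) = c_t(m)·c_t(n). -/
open scoped Classical

/-- The character sum `c_t(n) = Σ_{α mod n, (t²-α,n)=1, α ≡ r mod (n,h)} (α|n)`. -/
noncomputable def cFun (r : ℤ) (h : ℕ) (t : ℤ) (n : ℕ) : ℤ :=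
  ∑ α ∈ (Finset.range n).filter
      (fun α => Int.gcd (t ^ 2 - (α : ℤ)) (n : ℤ) = 1 ∧
        (α : ℤ) ≡ r [ZMOD (Nat.gcd n h : ℤ)]),
    jacobiSym (α : ℤ) n

/-- Auxiliary summand defined on `ZMod n`. -/
noncomputable def gAux (r : ℤ) (h : ℕ) (t : ℤ) (n : ℕ) (a : ZMod n) : ℤ :=
  if Int.gcd (t ^ 2 - (a.val : ℤ)) (n : ℤ) = 1 ∧
      (a.val : ℤ) ≡ r [ZMOD (Nat.gcd n h : ℤ)] then jacobiSym (a.val : ℤ) n else 0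

private lemma gcd_one_iff_of_modeq {a b k : ℤ} (hab : a ≡ b [ZMOD k]) :
    Int.gcd a k = 1 ↔ Int.gcd b k = 1 := by
  rw [← Int.isCoprime_iff_gcd_eq_one, ← Int.isCoprime_iff_gcd_eq_one]
  obtain ⟨c, hc⟩ := Int.ModEq.dvd hab
  have hb : a = b + k * (-c) := by rw [mul_neg]; linarith
  subst hb
  exact ⟨fun H => H.of_add_mul_left_left, fun H => H.add_mul_left_left (-c)⟩

private lemma gcd_mul_left_of_coprime {m n : ℕ} (hcop : Nat.Coprime m n) (h : ℕ) :
    Nat.gcd (m * n) h = Nat.gcd m h * Nat.gcd n h := by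
  apply Nat.dvd_antisymm
  · have h1 : Nat.gcd (m * n) h ∣
        Nat.gcd (Nat.gcd (m * n) h) m * Nat.gcd (Nat.gcd (m * n) h) n :=
      Nat.dvd_gcd_mul_gcd_iff_dvd_mul.mpr (Nat.gcd_dvd_left _ _)
    exact h1.trans (Nat.mul_dvd_mul
      (Nat.dvd_gcd (Nat.gcd_dvd_right _ _)
        ((Nat.gcd_dvd_left _ _).trans (Nat.gcd_dvd_right _ _)))
      (Nat.dvd_gcd (Nat.gcd_dvd_right _ _)
        ((Nat.gcd_dvd_left _ _).trans (Nat.gcd_dvd_right _ _))))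
  · refine Nat.dvd_gcd
      (Nat.mul_dvd_mul (Nat.gcd_dvd_left _ _) (Nat.gcd_dvd_left _ _)) ?_
    exact Nat.Coprime.mul_dvd_of_dvd_of_dvd
      (Nat.Coprime.coprime_dvd_left (Nat.gcd_dvd_left _ _)
        (Nat.Coprime.coprime_dvd_right (Nat.gcd_dvd_left _ _) hcop))
      (Nat.gcd_dvd_right _ _) (Nat.gcd_dvd_right _ _)

private lemma cFun_eq_sum (r : ℤ) (h : ℕ) (t : ℤ) (n : ℕ) [NeZero n] :
    cFun r h t n = ∑ a : ZMod n, gAux r h t n a := by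
  rw [cFun]
  have h1 : (do let a ← Finset.range n; pure ((a : ℤ)))
      = (Finset.range n).image (Nat.cast : ℕ → ℤ) := by
    simp only [Finset.pure_def, Finset.bind_def, Finset.sup_singleton_apply]
    ext x
    simp
  rw [h1, Finset.filter_image,
    Finset.sum_image (fun x _ y _ hxy => Nat.cast_injective hxy), Finset.sum_filter]
  exact Finset.sum_nbij'
    (i := fun (α : ℕ) => (α : ZMod n)) (j := fun (a : ZMod n) => a.val)
    (fun a _ => Finset.mem_univ _)
    (fun a _ => Finset.mem_range.mpr a.val_lt)
    (fun a ha => ZMod.val_natCast_of_lt (Finset.mem_range.mp ha))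
    (fun a _ => by simp [ZMod.natCast_val, ZMod.cast_id])
    (fun a ha => by
      have hv : ((a : ZMod n)).val = a := ZMod.val_natCast_of_lt (Finset.mem_range.mp ha)
      simp [gAux, hv])

private lemma gAux_mul (r : ℤ) (h : ℕ) (t : ℤ) (m n : ℕ) [NeZero m] [NeZero n]
    (hcop : Nat.Coprime m n) (x : ZMod (m * n)) :
    gAux r h t (m * n) x = gAux r h t m (x.val : ZMod m) * gAux r h t n (x.val : ZMod n) := by
  set a : ZMod m := (x.val : ZMod m) with ha
  set b : ZMod n := (x.val : ZMod n) with hb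
  have haval : a.val = x.val % m := ZMod.val_natCast _ _
  have hbval : b.val = x.val % n := ZMod.val_natCast _ _
  -- x.val ≡ a.val (mod m) over ℤ
  have hma : ((x.val : ℤ)) ≡ (a.val : ℤ) [ZMOD (m : ℤ)] := by
    rw [Int.ModEq, haval]
    push_cast
    rw [Int.emod_emod_of_dvd _ dvd_rfl]
  have hnb : ((x.val : ℤ)) ≡ (b.val : ℤ) [ZMOD (n : ℤ)] := by
    rw [Int.ModEq, hbval]
    push_cast
    rw [Int.emod_emod_of_dvd _ dvd_rfl]
  -- jacobi symbol splits
  have hJ : jacobiSym (x.val : ℤ) (m * n) = jacobiSym (a.val : ℤ) m * jacobiSym (b.val : ℤ) n := by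
    rw [jacobiSym.mul_right, jacobiSym.mod_left' hma, jacobiSym.mod_left' hnb]
  -- gcd condition splits
  have hG : (Int.gcd (t ^ 2 - (x.val : ℤ)) ((m * n : ℕ) : ℤ) = 1) ↔
      (Int.gcd (t ^ 2 - (a.val : ℤ)) (m : ℤ) = 1 ∧
       Int.gcd (t ^ 2 - (b.val : ℤ)) (n : ℤ) = 1) := by
    rw [← Int.isCoprime_iff_gcd_eq_one, ← Int.isCoprime_iff_gcd_eq_one, ← Int.isCoprime_iff_gcd_eq_one]
    push_cast
    rw [IsCoprime.mul_right_iff]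
    rw [Int.isCoprime_iff_gcd_eq_one, Int.isCoprime_iff_gcd_eq_one,
      Int.isCoprime_iff_gcd_eq_one, Int.isCoprime_iff_gcd_eq_one]
    rw [gcd_one_iff_of_modeq (Int.ModEq.sub (Int.ModEq.refl _) hma),
      gcd_one_iff_of_modeq (Int.ModEq.sub (Int.ModEq.refl _) hnb)]
  -- congruence condition splits
  have hd : Nat.gcd (m * n) h = Nat.gcd m h * Nat.gcd n h := gcd_mul_left_of_coprime hcop h
  have hdcop : Nat.Coprime (Nat.gcd m h) (Nat.gcd n h) :=
    Nat.Coprime.coprime_dvd_left (Nat.gcd_dvd_left _ _)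
      (Nat.Coprime.coprime_dvd_right (Nat.gcd_dvd_left _ _) hcop)
  have hma' : ((x.val : ℤ)) ≡ (a.val : ℤ) [ZMOD ((Nat.gcd m h : ℕ) : ℤ)] :=
    hma.of_dvd (Int.natCast_dvd_natCast.mpr (Nat.gcd_dvd_left _ _))
  have hnb' : ((x.val : ℤ)) ≡ (b.val : ℤ) [ZMOD ((Nat.gcd n h : ℕ) : ℤ)] :=
    hnb.of_dvd (Int.natCast_dvd_natCast.mpr (Nat.gcd_dvd_left _ _))
  have hC : ((x.val : ℤ) ≡ r [ZMOD (Nat.gcd (m * n) h : ℤ)]) ↔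
      (((a.val : ℤ) ≡ r [ZMOD (Nat.gcd m h : ℤ)]) ∧
       ((b.val : ℤ) ≡ r [ZMOD (Nat.gcd n h : ℤ)])) := by
    rw [hd]
    push_cast
    rw [← Int.modEq_and_modEq_iff_modEq_mul (by simpa using hdcop)]
    constructor
    · rintro ⟨h1, h2⟩
      exact ⟨hma'.symm.trans h1, hnb'.symm.trans h2⟩
    · rintro ⟨h1, h2⟩
      exact ⟨hma'.trans h1, hnb'.trans h2⟩
  -- combine
  unfold gAux
  by_cases h1 : Int.gcd (t ^ 2 - (a.val : ℤ)) (m : ℤ) = 1 ∧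
      (a.val : ℤ) ≡ r [ZMOD (Nat.gcd m h : ℤ)] <;>
  by_cases h2 : Int.gcd (t ^ 2 - (b.val : ℤ)) (n : ℤ) = 1 ∧
      (b.val : ℤ) ≡ r [ZMOD (Nat.gcd n h : ℤ)]
  · rw [if_pos ⟨hG.mpr ⟨h1.1, h2.1⟩, hC.mpr ⟨h1.2, h2.2⟩⟩, if_pos h1, if_pos h2, hJ]
  · rw [if_neg, if_pos h1, if_neg h2, mul_zero]
    rintro ⟨hg, hc⟩
    exact h2 ⟨(hG.mp hg).2, (hC.mp hc).2⟩
  · rw [if_neg, if_neg h1, zero_mul]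
    rintro ⟨hg, hc⟩
    exact h1 ⟨(hG.mp hg).1, (hC.mp hc).1⟩
  · rw [if_neg, if_neg h1, zero_mul]
    rintro ⟨hg, hc⟩
    exact h1 ⟨(hG.mp hg).1, (hC.mp hc).1⟩

/-- `c_t` is multiplicative on coprime odd positive arguments. -/
theorem stmt6 (h : ℕ) (hpos : 0 < h) (hodd : Odd h) (r : ℤ) (t : ℤ)
    (m n : ℕ) (hm : 0 < m) (hn : 0 < n) (hmodd : Odd m) (hnodd : Odd n)
    (hcop : Nat.Coprime m n) :
    cFun r h t (m * n) = cFun r h t m * cFun r h t n := by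
  haveI : NeZero m := ⟨hm.ne'⟩
  haveI : NeZero n := ⟨hn.ne'⟩
  haveI : NeZero (m * n) := ⟨(Nat.mul_pos hm hn).ne'⟩
  rw [cFun_eq_sum, cFun_eq_sum, cFun_eq_sum]
  -- the CRT map
  have hbij : Function.Bijective
      (fun x : ZMod (m * n) => ((x.val : ZMod m), (x.val : ZMod n))) := by
    rw [Fintype.bijective_iff_injective_and_card]
    constructor
    · intro x y hxy
      have h1 : x.val % m = y.val % m := by
        have h' := congrArg (fun p : ZMod m × ZMod n => p.1.val) hxy
        simpa only [ZMod.val_natCast] using h'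
      have h2 : x.val % n = y.val % n := by
        have h' := congrArg (fun p : ZMod m × ZMod n => p.2.val) hxy
        simpa only [ZMod.val_natCast] using h'
      have hmn : x.val ≡ y.val [MOD m * n] :=
        (Nat.modEq_and_modEq_iff_modEq_mul hcop).mp ⟨h1, h2⟩
      have : x.val = y.val :=
        Nat.ModEq.eq_of_lt_of_lt hmn x.val_lt y.val_lt
      calc x = (x.val : ZMod (m * n)) := by rw [ZMod.natCast_val, ZMod.cast_id]
        _ = (y.val : ZMod (m * n)) := by rw [this]
        _ = y := by rw [ZMod.natCast_val, ZMod.cast_id]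
    · simp [ZMod.card]
  calc ∑ x : ZMod (m * n), gAux r h t (m * n) x
      = ∑ p : ZMod m × ZMod n, gAux r h t m p.1 * gAux r h t n p.2 := by
        apply Fintype.sum_bijective _ hbij
        intro x
        exact gAux_mul r h t m n hcop x
    _ = (∑ a : ZMod m, gAux r h t m a) * (∑ b : ZMod n, gAux r h t n b) := by
        rw [Finset.sum_mul_sum, ← Finset.sum_product']
        rfl
end

section
/- Fix a positive odd integer h and an integer r, and for an integer t and an odd positive integer n let c_t(n) = Σ_{α mod n, gcd(t²−α,n)=1, α ≡ r mod gcd(n,h)} (α|n), where (α|n) is the Jacobi symbol. Let p be an odd prime with p | h, let t be an integer with p ∤ (t²−r), and let ℓ ≥ 1. Then c_t(p^ℓ) = ( p^ℓ / gcd(p^ℓ, h) ) · (r|p)^ℓ, where (r|p) is the Legendre symbol (equal to 0 when p | r). -/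
open scoped Classical

/-- Counting lemma: the number of `α < g*q` with `α % g = r'` is `q`, when `r' < g`. -/
lemma count_mod_aux (g q r' : ℕ) (hg : 0 < g) (hr : r' < g) :
    ((Finset.range (g * q)).filter (fun α => α % g = r')).card = q := by
  have key : ((Finset.range (g * q)).filter (fun α => α % g = r')).card
      = (Finset.range q).card := by
    apply Finset.card_nbij' (fun α => α / g) (fun k => g * k + r')
    · intro α hα
      simp only [Finset.mem_coe, Finset.mem_filter, Finset.mem_range] at hα
      simp only [Finset.mem_coe, Finset.mem_range]
      exact Nat.div_lt_of_lt_mul hα.1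
    · intro k hk
      simp only [Finset.mem_coe, Finset.mem_range] at hk
      simp only [Finset.mem_coe, Finset.mem_filter, Finset.mem_range]
      constructor
      · calc g * k + r' < g * k + g := by omega
          _ = g * (k + 1) := by ring
          _ ≤ g * q := Nat.mul_le_mul_left g hk
      · rw [Nat.mul_add_mod, Nat.mod_eq_of_lt hr]
    · intro α hα
      simp only [Finset.mem_coe, Finset.mem_filter, Finset.mem_range] at hα
      rw [← hα.2]
      exact Nat.div_add_mod α g
    · intro k _
      show (g * k + r') / g = k
      rw [Nat.mul_add_div hg, Nat.div_eq_of_lt hr, add_zero]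
  rw [key, Finset.card_range]

/-- for `p` an odd prime dividing `h`, `t` with `p ∤ t² - r` and `ℓ ≥ 1`,
`c_t(p^ℓ) = (p^ℓ/(p^ℓ,h))·(r|p)^ℓ`. -/
theorem stmt7 (h : ℕ) (hpos : 0 < h) (hodd : Odd h) (r : ℤ)
    (p : ℕ) (hp : p.Prime) (hp2 : p ≠ 2) (hph : p ∣ h)
    (t : ℤ) (ht : ¬ (p : ℤ) ∣ (t ^ 2 - r)) (ℓ : ℕ) (hℓ : 1 ≤ ℓ) :
    cFun r h t (p ^ ℓ) = ((p ^ ℓ / Nat.gcd (p ^ ℓ) h : ℕ) : ℤ) * (jacobiSym r p) ^ ℓ := by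
  set N := p ^ ℓ with hN
  set g := Nat.gcd N h with hg
  have hNpos : 0 < N := pow_pos hp.pos ℓ
  have hgdvd : g ∣ N := Nat.gcd_dvd_left N h
  have hpg : p ∣ g := Nat.dvd_gcd (dvd_pow_self p (by omega)) hph
  have hgpos : 0 < g := Nat.gcd_pos_of_pos_left _ hNpos
  -- For α ≡ r mod g, p ∣ (r - α), hence the gcd condition is automatic.
  have hkey : ∀ α : ℕ, (α : ℤ) ≡ r [ZMOD (g : ℤ)] → (p : ℤ) ∣ (r - (α : ℤ)) := by
    intro α hmod
    exact (Int.natCast_dvd_natCast.mpr hpg).trans hmod.dvd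
  have hgcd : ∀ α : ℕ, (α : ℤ) ≡ r [ZMOD (g : ℤ)] →
      Int.gcd (t ^ 2 - (α : ℤ)) (N : ℤ) = 1 := by
    intro α hmod
    have hnd : ¬ (p : ℤ) ∣ (t ^ 2 - (α : ℤ)) := by
      intro hd
      apply ht
      have h2 := dvd_sub hd (hkey α hmod)
      have h3 : t ^ 2 - (α : ℤ) - (r - (α : ℤ)) = t ^ 2 - r := by ring
      rwa [h3] at h2
    rw [← Int.isCoprime_iff_gcd_eq_one, hN]
    push_cast
    exact (((Nat.prime_iff_prime_int.mp hp).coprime_iff_not_dvd.mpr hnd).symm).pow_right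
  -- simplify the filter
  have hfeq : (Finset.range N).filter
      (fun α : ℕ => Int.gcd (t ^ 2 - (α : ℤ)) (N : ℤ) = 1 ∧
        (α : ℤ) ≡ r [ZMOD (g : ℤ)]) =
      (Finset.range N).filter (fun α : ℕ => (α : ℤ) ≡ r [ZMOD (g : ℤ)]) := by
    apply Finset.filter_congr
    intro α _
    exact ⟨fun ⟨_, h2⟩ => h2, fun h2 => ⟨hgcd α h2, h2⟩⟩
  rw [cFun]
  have himg : (do let a ← Finset.range N; pure ((a:ℤ))) =
      (Finset.range N).image (fun a : ℕ => (a:ℤ)) := by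
    ext x; simp [Finset.bind_def, Finset.mem_sup]
  rw [himg, Finset.filter_image,
    Finset.sum_image (fun x _ y _ hxy => by exact_mod_cast hxy), hfeq]
  -- each Jacobi symbol term equals (r|p)^ℓ
  have hterm : ∀ α ∈ (Finset.range N).filter (fun α : ℕ => (α : ℤ) ≡ r [ZMOD (g : ℤ)]),
      jacobiSym (α : ℤ) N = (jacobiSym r p) ^ ℓ := by
    intro α hα
    rw [Finset.mem_filter] at hα
    have hdvd : (p : ℤ) ∣ (r - (α : ℤ)) := hkey α hα.2
    have hmodp : (α : ℤ) ≡ r [ZMOD (p : ℤ)] := Int.modEq_iff_dvd.mpr hdvd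
    rw [hN, jacobiSym.pow_right, jacobiSym.mod_left' hmodp]
  rw [Finset.sum_congr rfl hterm, Finset.sum_const, nsmul_eq_mul]
  congr 1
  norm_cast
  -- rewrite modular condition to a nat condition
  set r' := (r % (g : ℤ)).toNat with hr'
  have hr'lt : r' < g := by
    rw [hr']
    have h1 : 0 ≤ r % (g : ℤ) := Int.emod_nonneg r (by exact_mod_cast hgpos.ne')
    have h2 : r % (g : ℤ) < (g : ℤ) := Int.emod_lt_of_pos r (by exact_mod_cast hgpos)
    omega
  have hcond : ∀ α : ℕ, ((α : ℤ) ≡ r [ZMOD (g : ℤ)]) ↔ α % g = r' := by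
    intro α
    have h0 : 0 ≤ r % (g : ℤ) := Int.emod_nonneg r (by exact_mod_cast hgpos.ne')
    rw [Int.ModEq]
    constructor
    · intro hm
      have h4 : ((α % g : ℕ) : ℤ) = r % (g : ℤ) := by push_cast; exact hm
      omega
    · intro hm
      have h4 : ((α % g : ℕ) : ℤ) = r % (g : ℤ) := by rw [hm, hr']; omega
      push_cast at h4
      exact h4
  have hfeq2 : (Finset.range N).filter (fun α : ℕ => (α : ℤ) ≡ r [ZMOD (g : ℤ)]) =
      (Finset.range N).filter (fun α => α % g = r') := by
    apply Finset.filter_congr; intro α _; exact (hcond α)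
  rw [hfeq2]
  obtain ⟨q, hq⟩ := hgdvd
  rw [hq, count_mod_aux g q r' hgpos hr'lt, Nat.mul_div_cancel_left q hgpos]
end

section
/- Fix a positive odd integer h and an integer r, and for an integer t and an odd positive integer n let c_t(n) = Σ_{α mod n, gcd(t²−α,n)=1, α ≡ r mod gcd(n,h)} (α|n), where (α|n) is the Jacobi symbol. Let p be an odd prime with p ∤ h, let t be an integer, and let ℓ ≥ 1. Then: c_t(p^ℓ) = 0 if p | t and ℓ is odd; c_t(p^ℓ) = −p^{ℓ−1} if p ∤ t and ℓ is odd; c_t(p^ℓ) = p^ℓ − p^{ℓ−1} if p | t and ℓ is even; c_t(p^ℓ) = p^ℓ − 2p^{ℓ−1} if p ∤ t and ℓ is even. -/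
open scoped Classical

/-- `cFun` as a sum over `Finset.range n` with a natural-number binder. -/
lemma cFun_eq (r : ℤ) (h : ℕ) (t : ℤ) (n : ℕ) :
    cFun r h t n = ∑ α ∈ (Finset.range n).filter
        (fun α : ℕ => Int.gcd (t ^ 2 - (α : ℤ)) (n : ℤ) = 1 ∧
          (α : ℤ) ≡ r [ZMOD (Nat.gcd n h : ℤ)]),
      jacobiSym (α : ℤ) n := by
  rw [cFun]
  simp only [Finset.bind_def, Finset.pure_def, Finset.sup_singleton_apply, Finset.filter_image]
  rw [@Finset.sum_image ℤ ℕ ℤ _ _ (fun a b => Classical.propDecidable (a = b)) _ Nat.cast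
    (fun a _ b _ hab => Nat.cast_injective hab)]

/-- Summing a function of the residue mod `p` over `range p` equals summing over `ZMod p`. -/
lemma sum_range_zmod (p : ℕ) [NeZero p] (F : ZMod p → ℤ) :
    ∑ x ∈ Finset.range p, F (x : ZMod p) = ∑ a : ZMod p, F a := by
  refine Finset.sum_nbij' (fun x => (x : ZMod p)) (fun a => a.val) ?_ ?_ ?_ ?_ ?_
  · intro x _; exact Finset.mem_univ _
  · intro a _; exact Finset.mem_range.mpr (ZMod.val_lt a)
  · intro x hx; exact ZMod.val_cast_of_lt (Finset.mem_range.mp hx)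
  · intro a _; exact ZMod.natCast_rightInverse a
  · intro x _; rfl

lemma sum_range_mul_zmod (p : ℕ) [NeZero p] (F : ZMod p → ℤ) (N : ℕ) :
    ∑ α ∈ Finset.range (N * p), F (α : ZMod p) = N * ∑ a : ZMod p, F a := by
  induction N with
  | zero => simp
  | succ n ih =>
    rw [add_mul, one_mul, Finset.sum_range_add, ih]
    have h2 : ∑ x ∈ Finset.range p, F ((n * p + x : ℕ) : ZMod p) = ∑ a : ZMod p, F a := by
      rw [← sum_range_zmod p F]
      refine Finset.sum_congr rfl fun x _ => ?_
      congr 1; push_cast; simp [ZMod.natCast_self]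
    rw [h2]; push_cast; ring

/-- the values of `c_t` at powers of odd primes `p ∤ h`. -/
theorem stmt8 (h : ℕ) (hpos : 0 < h) (hodd : Odd h) (r : ℤ)
    (p : ℕ) (hp : p.Prime) (hp2 : p ≠ 2) (hph : ¬ p ∣ h)
    (t : ℤ) (ℓ : ℕ) (hℓ : 1 ≤ ℓ) :
    ((p : ℤ) ∣ t → Odd ℓ → cFun r h t (p ^ ℓ) = 0) ∧
    (¬ (p : ℤ) ∣ t → Odd ℓ → cFun r h t (p ^ ℓ) = -(p : ℤ) ^ (ℓ - 1)) ∧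
    ((p : ℤ) ∣ t → Even ℓ → cFun r h t (p ^ ℓ) = (p : ℤ) ^ ℓ - (p : ℤ) ^ (ℓ - 1)) ∧
    (¬ (p : ℤ) ∣ t → Even ℓ →
      cFun r h t (p ^ ℓ) = (p : ℤ) ^ ℓ - 2 * (p : ℤ) ^ (ℓ - 1)) := by
  haveI : Fact p.Prime := ⟨hp⟩
  haveI : NeZero p := ⟨hp.ne_zero⟩
  have hpInt : Prime (p : ℤ) := Nat.prime_iff_prime_int.mp hp
  -- gcd (p^ℓ) h = 1
  have hgcd1 : Nat.gcd (p ^ ℓ) h = 1 :=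
    Nat.Coprime.pow_left ℓ (hp.coprime_iff_not_dvd.mpr hph)
  set τ : ZMod p := ((t : ZMod p)) ^ 2 with hτ
  set g : ZMod p → ℤ := fun a => (quadraticChar (ZMod p) a) ^ ℓ with hg
  set F : ZMod p → ℤ := fun a => if a = τ then 0 else g a with hF
  -- main reduction
  have key : cFun r h t (p ^ ℓ) = (p : ℤ) ^ (ℓ - 1) * ∑ a : ZMod p, F a := by
    rw [cFun_eq]
    have h1 : ∀ α ∈ Finset.range (p ^ ℓ),
        (Int.gcd (t ^ 2 - (α : ℤ)) ((p ^ ℓ : ℕ) : ℤ) = 1 ∧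
          (α : ℤ) ≡ r [ZMOD (Nat.gcd (p ^ ℓ) h : ℤ)]) ↔
        ((α : ZMod p) ≠ τ) := by
      intro α _
      rw [hgcd1]
      constructor
      · rintro ⟨h2, -⟩
        have : IsCoprime (t ^ 2 - (α : ℤ)) ((p : ℤ)) := by
          have := Int.isCoprime_iff_gcd_eq_one.mpr h2
          push_cast at this
          exact (IsCoprime.pow_right_iff hℓ).mp this
        have hnd : ¬ (p : ℤ) ∣ (t ^ 2 - (α : ℤ)) :=
          (hpInt.coprime_iff_not_dvd).mp this.symm
        intro hcon
        apply hnd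
        rw [← ZMod.intCast_zmod_eq_zero_iff_dvd]
        push_cast
        rw [hcon, hτ]; ring
      · intro hne
        refine ⟨?_, Int.ModEq.refl _ |>.trans ?_⟩
        · rw [← Int.isCoprime_iff_gcd_eq_one]
          push_cast
          rw [IsCoprime.pow_right_iff hℓ]
          refine ((hpInt.coprime_iff_not_dvd).mpr ?_).symm
          intro hdvd
          apply hne
          have : ((t ^ 2 - (α : ℤ) : ℤ) : ZMod p) = 0 :=
            (ZMod.intCast_zmod_eq_zero_iff_dvd _ _).mpr hdvd
          push_cast at this
          rw [hτ]
          linear_combination -this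
        · exact Int.modEq_one

    have h2 : ∀ α : ℕ, (if (α : ZMod p) ≠ τ then jacobiSym (α : ℤ) (p ^ ℓ) else 0)
        = F ((α : ZMod p)) := by
      intro α
      have hj : jacobiSym (α : ℤ) (p ^ ℓ) = g ((α : ZMod p)) := by
        rw [jacobiSym.pow_right, hg, ← jacobiSym.legendreSym.to_jacobiSym, legendreSym]
        push_cast
        rfl
      rw [hF]
      by_cases hc : (α : ZMod p) = τ <;> simp [hc, hj]
    have e : ∑ α ∈ (Finset.range (p ^ ℓ)).filter
        (fun α : ℕ => Int.gcd (t ^ 2 - (α : ℤ)) ((p ^ ℓ : ℕ) : ℤ) = 1 ∧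
          (α : ℤ) ≡ r [ZMOD (Nat.gcd (p ^ ℓ) h : ℤ)]),
        jacobiSym (α : ℤ) (p ^ ℓ)
        = ∑ α ∈ Finset.range (p ^ ℓ), F ((α : ZMod p)) := by
      rw [Finset.sum_filter]
      exact Finset.sum_congr rfl fun α hα => by
        rw [if_congr (h1 α hα) rfl rfl, h2 α]
    rw [e]
    have hpow : p ^ ℓ = p ^ (ℓ - 1) * p := by
      rw [← pow_succ, Nat.sub_add_cancel hℓ]
    rw [hpow, sum_range_mul_zmod]
    push_cast; ring
  -- sum of F
  have hsum : ∑ a : ZMod p, F a = (∑ a : ZMod p, g a) - g τ := by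
    have h0 : F τ = 0 := by simp [hF]
    calc ∑ a : ZMod p, F a
        = ∑ a ∈ Finset.univ.erase τ, F a := (Finset.sum_erase _ h0).symm
      _ = ∑ a ∈ Finset.univ.erase τ, g a :=
          Finset.sum_congr rfl (fun a ha => by
            simp only [hF, if_neg (Finset.mem_erase.mp ha).1])
      _ = (∑ a : ZMod p, g a) - g τ := Finset.sum_erase_eq_sub (Finset.mem_univ τ)
  have hchar2 : ringChar (ZMod p) ≠ 2 := by rw [ZMod.ringChar_zmod_n]; exact hp2
  -- values of quadraticChar
  have htri : ∀ a : ZMod p, quadraticChar (ZMod p) a = 0 ∨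
      quadraticChar (ZMod p) a = 1 ∨ quadraticChar (ZMod p) a = -1 := by
    intro a
    by_cases ha : a = 0
    · left; simp [ha]
    · right
      have := quadraticChar_sq_one (F := ZMod p) ha
      rw [sq] at this
      rcases Int.eq_one_or_neg_one_of_mul_eq_one' this with ⟨h1, -⟩ | ⟨h1, -⟩
      · left; exact h1
      · right; exact h1
  -- value of g at τ
  have hgτ : g τ = if (p : ℤ) ∣ t then 0 else 1 := by
    by_cases hd : (p : ℤ) ∣ t
    · have ht0 : (t : ZMod p) = 0 := (ZMod.intCast_zmod_eq_zero_iff_dvd _ _).mpr hd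
      simp only [hg, hτ, ht0, if_pos hd]
      rw [zero_pow (by norm_num : (2:ℕ) ≠ 0), quadraticChar_zero,
        zero_pow (by omega : ℓ ≠ 0)]
    · have ht0 : (t : ZMod p) ≠ 0 := fun hc =>
        hd ((ZMod.intCast_zmod_eq_zero_iff_dvd _ _).mp hc)
      simp only [hg, hτ, if_neg hd]
      rw [quadraticChar_sq_one' ht0, one_pow]
  refine ⟨?_, ?_, ?_, ?_⟩
  · -- p ∣ t, ℓ odd
    intro hd hoddℓ
    have hgodd : ∀ a : ZMod p, g a = quadraticChar (ZMod p) a := by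
      intro a
      simp only [hg]
      rcases htri a with h1 | h1 | h1 <;> rw [h1] <;>
        simp [zero_pow (by omega : ℓ ≠ 0), hoddℓ.neg_one_pow]
    have hS : ∑ a : ZMod p, g a = 0 :=
      (Finset.sum_congr rfl fun a _ => hgodd a).trans (quadraticChar_sum_zero hchar2)
    rw [key, hsum, hS, hgτ, if_pos hd]; ring
  · -- p ∤ t, ℓ odd
    intro hd hoddℓ
    have hgodd : ∀ a : ZMod p, g a = quadraticChar (ZMod p) a := by
      intro a
      simp only [hg]
      rcases htri a with h1 | h1 | h1 <;> rw [h1] <;>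
        simp [zero_pow (by omega : ℓ ≠ 0), hoddℓ.neg_one_pow]
    have hS : ∑ a : ZMod p, g a = 0 :=
      (Finset.sum_congr rfl fun a _ => hgodd a).trans (quadraticChar_sum_zero hchar2)
    rw [key, hsum, hS, hgτ, if_neg hd]; ring
  all_goals (
    intro hd hevenℓ
    have hgval : ∀ a : ZMod p, g a = 1 - (if a = 0 then 1 else 0) := by
      intro a
      simp only [hg]
      by_cases ha : a = 0
      · rw [ha]; simp [zero_pow (by omega : ℓ ≠ 0)]
      · rcases htri a with h1 | h1 | h1
        · exact absurd (quadraticChar_eq_zero_iff.mp h1) ha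
        · rw [h1]; simp [ha]
        · rw [h1, hevenℓ.neg_one_pow]; simp [ha]
    have hS : ∑ a : ZMod p, g a = (p : ℤ) - 1 := by
      rw [show (∑ a : ZMod p, g a) = ∑ a : ZMod p, ((1:ℤ) - if a = 0 then 1 else 0)
          from Finset.sum_congr rfl fun a _ => hgval a, Finset.sum_sub_distrib,
        Finset.sum_const, Finset.card_univ, ZMod.card, Finset.sum_ite_eq'
          Finset.univ (0 : ZMod p) (fun _ => (1 : ℤ)), if_pos (Finset.mem_univ _)]
      push_cast; ring
    rw [key, hsum, hS, hgτ]
    have hpp : (p : ℤ) ^ (ℓ - 1) * (p : ℤ) = (p : ℤ) ^ ℓ := by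
      rw [← pow_succ, Nat.sub_add_cancel hℓ]
    first
      | (rw [if_pos hd]; linear_combination hpp)
      | (rw [if_neg hd]; linear_combination hpp))
end

section
/- Let h be a positive odd integer, r an integer such that gcd(r,h) is squarefree, and m a positive integer. Then Σ_{d ≥ 1 odd, gcd(d,m)=1, gcd(d²,h) | r} μ(d) · φ(gcd(d²,h)) / φ(d²) = ∏_{p odd prime, p ∤ m, p ∥ h, p | r} (1 − 1/p) · ∏_{p odd prime, p ∤ mh} ( 1 − 1/(p(p−1)) ), where the series on the left converges absolutely and the infinite product on the right converges. -/
open ArithmeticFunction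

noncomputable def f10 (h : ℕ) (r : ℤ) (m : ℕ) (d : ℕ) : ℝ :=
  if Odd d ∧ Nat.gcd d m = 1 ∧ ((Nat.gcd (d ^ 2) h : ℤ) ∣ r) then
    (moebius d : ℝ) * (Nat.totient (Nat.gcd (d ^ 2) h) : ℝ) / (Nat.totient (d ^ 2) : ℝ)
  else 0

theorem gcd_mul_coprime {x y : ℕ} (h : ℕ) (hxy : Nat.Coprime x y) :
    Nat.gcd (x*y) h = Nat.gcd x h * Nat.gcd y h := by
  have h1 : Nat.gcd x h * Nat.gcd y h ∣ Nat.gcd (x*y) h :=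
    Nat.dvd_gcd (Nat.mul_dvd_mul (Nat.gcd_dvd_left _ _) (Nat.gcd_dvd_left _ _))
      (Nat.Coprime.mul_dvd_of_dvd_of_dvd
        ((Nat.Coprime.coprime_dvd_left (Nat.gcd_dvd_left _ _) (hxy.coprime_dvd_right (Nat.gcd_dvd_left _ _))))
        (Nat.gcd_dvd_right _ _) (Nat.gcd_dvd_right _ _))
  have h2 : Nat.gcd (x*y) h ∣ Nat.gcd x h * Nat.gcd y h := by
    have := (Nat.gcd_mul_gcd_eq_iff_dvd_mul_of_coprime (x := Nat.gcd (x*y) h) hxy).mpr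
      (Nat.gcd_dvd_left _ _)
    calc Nat.gcd (x*y) h = Nat.gcd (Nat.gcd (x*y) h) x * Nat.gcd (Nat.gcd (x*y) h) y := this.symm
    _ ∣ Nat.gcd x h * Nat.gcd y h :=
      Nat.mul_dvd_mul (Nat.dvd_gcd (Nat.gcd_dvd_right _ _) ((Nat.gcd_dvd_left _ _).trans (Nat.gcd_dvd_right _ _)))
        (Nat.dvd_gcd (Nat.gcd_dvd_right _ _) ((Nat.gcd_dvd_left _ _).trans (Nat.gcd_dvd_right _ _)))
  exact Nat.dvd_antisymm h2 h1

theorem f10_cond_iff (h : ℕ) (r : ℤ) (m : ℕ) {a b : ℕ} (hab : Nat.Coprime a b) :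
    (Odd (a*b) ∧ Nat.gcd (a*b) m = 1 ∧ ((Nat.gcd ((a*b) ^ 2) h : ℤ) ∣ r))
      ↔ (Odd a ∧ Nat.gcd a m = 1 ∧ ((Nat.gcd (a ^ 2) h : ℤ) ∣ r))
        ∧ (Odd b ∧ Nat.gcd b m = 1 ∧ ((Nat.gcd (b ^ 2) h : ℤ) ∣ r)) := by
  have hab2 : Nat.Coprime (a^2) (b^2) := hab.pow _ _
  have hgcd : Nat.gcd ((a*b)^2) h = Nat.gcd (a^2) h * Nat.gcd (b^2) h := by
    rw [mul_pow]; exact gcd_mul_coprime h hab2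
  have hcop : Nat.Coprime (Nat.gcd (a^2) h) (Nat.gcd (b^2) h) :=
    Nat.Coprime.coprime_dvd_left (Nat.gcd_dvd_left _ _)
      (hab2.coprime_dvd_right (Nat.gcd_dvd_left _ _))
  rw [Nat.odd_mul, hgcd]
  constructor
  · rintro ⟨⟨ha, hb⟩, hm, hd⟩
    have hm' := Nat.coprime_mul_iff_left.mp hm
    push_cast at hd
    exact ⟨⟨ha, hm'.1, (dvd_mul_right _ _).trans hd⟩, ⟨hb, hm'.2, (dvd_mul_left _ _).trans hd⟩⟩
  · rintro ⟨⟨ha, hma, hda⟩, ⟨hb, hmb, hdb⟩⟩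
    refine ⟨⟨ha, hb⟩, Nat.coprime_mul_iff_left.mpr ⟨hma, hmb⟩, ?_⟩
    push_cast
    exact (Nat.isCoprime_iff_coprime.mpr hcop).mul_dvd hda hdb

theorem f10_mul (h : ℕ) (r : ℤ) (m : ℕ) {a b : ℕ} (hab : Nat.Coprime a b) :
    f10 h r m (a*b) = f10 h r m a * f10 h r m b := by
  have hab2 : Nat.Coprime (a^2) (b^2) := hab.pow _ _
  have hgcd : Nat.gcd ((a*b)^2) h = Nat.gcd (a^2) h * Nat.gcd (b^2) h := by
    rw [mul_pow]; exact gcd_mul_coprime h hab2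
  have hcop : Nat.Coprime (Nat.gcd (a^2) h) (Nat.gcd (b^2) h) :=
    Nat.Coprime.coprime_dvd_left (Nat.gcd_dvd_left _ _)
      (hab2.coprime_dvd_right (Nat.gcd_dvd_left _ _))
  unfold f10
  rw [if_congr (f10_cond_iff h r m hab) rfl rfl]
  by_cases hA : Odd a ∧ Nat.gcd a m = 1 ∧ ((Nat.gcd (a ^ 2) h : ℤ) ∣ r)
  · by_cases hB : Odd b ∧ Nat.gcd b m = 1 ∧ ((Nat.gcd (b ^ 2) h : ℤ) ∣ r)
    · rw [if_pos ⟨hA, hB⟩, if_pos hA, if_pos hB,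
        hgcd, Nat.totient_mul hcop, mul_pow, Nat.totient_mul hab2,
        isMultiplicative_moebius.map_mul_of_coprime hab]
      push_cast
      ring
    · rw [if_neg (fun hc => hB hc.2), if_neg hB, mul_zero]
  · rw [if_neg (fun hc => hA hc.1), if_neg hA, zero_mul]


theorem odd_le_totient_sq : ∀ n : ℕ, Odd n → n ≤ n.totient ^ 2 := by
  intro n
  induction n using Nat.recOnPosPrimePosCoprime with
  | prime_pow p k hp hk =>
    intro hodd
    have hp' : Nat.Prime p := hp
    have hop : Odd p := by
      rcases Nat.even_or_odd p with h | h
      · exact absurd (Nat.even_pow.mpr ⟨h, hk.ne'⟩) (Nat.not_even_iff_odd.mpr hodd)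
      · exact h
    have hp3 : 3 ≤ p := by
      have := hp'.two_le
      have := Nat.odd_iff.mp hop
      omega
    rw [Nat.totient_prime_pow hp' hk]
    obtain ⟨q, rfl⟩ : ∃ q, p = q + 1 := ⟨p - 1, by omega⟩
    have hq : 2 ≤ q := by omega
    simp only [Nat.add_sub_cancel]
    calc (q+1)^k ≤ (q+1)^(2*k-1) := Nat.pow_le_pow_right (by omega) (by omega)
    _ = (q+1)^(2*(k-1)) * (q+1) := by rw [← pow_succ]; congr 1; omega
    _ ≤ (q+1)^(2*(k-1)) * q^2 := Nat.mul_le_mul_left _ (by nlinarith)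
    _ = ((q+1)^(k-1) * q)^2 := by rw [mul_pow, ← pow_mul, mul_comm (k-1) 2]
  | zero => intro h; simp at h
  | one => simp
  | coprime a b ha hb hab iha ihb =>
    intro hodd
    rw [Nat.odd_mul] at hodd
    rw [Nat.totient_mul hab, mul_pow]
    exact Nat.mul_le_mul (iha hodd.1) (ihb hodd.2)

theorem totient_sq_eq (d : ℕ) : (d^2).totient = d * d.totient := by
  rcases Nat.eq_zero_or_pos d with rfl | hd
  · simp
  have h0 := Nat.totient_gcd_mul_totient_mul d d
  rw [Nat.gcd_self] at h0
  have hpos : 0 < d.totient := Nat.totient_pos.mpr hd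
  have : d.totient * (d * d).totient = d.totient * (d * d.totient) := by ring_nf; ring_nf at h0; linarith
  have h2 := Nat.eq_of_mul_eq_mul_left hpos this
  rw [pow_two]; omega

theorem f10_summable (h : ℕ) (hpos : 0 < h) (r : ℤ) (m : ℕ) :
    Summable (fun d : ℕ => |f10 h r m d|) := by
  have hmaj : Summable (fun d : ℕ => (h:ℝ) * (1 / (d:ℝ) ^ ((3:ℝ)/2))) :=
    (Real.summable_one_div_nat_rpow.mpr (by norm_num)).mul_left _
  apply Summable.of_nonneg_of_le (fun d => abs_nonneg _) ?_ hmaj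
  intro d
  unfold f10
  split_ifs with hc
  · obtain ⟨hodd, -, -⟩ := hc
    have hd1 : 1 ≤ d := hodd.pos
    have hdR : (0:ℝ) < d := by exact_mod_cast hd1
    have hrp : (d:ℝ) ^ ((3:ℝ)/2) = d * Real.sqrt d := by
      rw [show (3:ℝ)/2 = 1 + 1/2 by norm_num, Real.rpow_add hdR, Real.rpow_one,
        Real.sqrt_eq_rpow]
    have hsq : Real.sqrt d ≤ (d.totient : ℝ) := by
      have := odd_le_totient_sq d hodd
      calc Real.sqrt d ≤ Real.sqrt ((d.totient:ℝ)^2) := by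
            apply Real.sqrt_le_sqrt; exact_mod_cast this
      _ = d.totient := Real.sqrt_sq (by positivity)
    have key : (d:ℝ) ^ ((3:ℝ)/2) ≤ ((d^2).totient : ℝ) := by
      rw [hrp, totient_sq_eq]
      push_cast
      exact mul_le_mul_of_nonneg_left hsq (by positivity)
    have hrppos : (0:ℝ) < (d:ℝ) ^ ((3:ℝ)/2) := by positivity
    have hnum : |((moebius d : ℤ):ℝ) * ((Nat.gcd (d^2) h).totient : ℝ)| ≤ (h:ℝ) := by
      rw [abs_mul]
      have hg : |(((Nat.gcd (d^2) h).totient : ℕ) : ℝ)| ≤ (h:ℝ) := by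
        rw [abs_of_nonneg (by positivity)]
        exact_mod_cast (Nat.totient_le _).trans (Nat.gcd_le_right _ hpos)
      have hmu : |((moebius d : ℤ) : ℝ)| ≤ 1 := by
        have := ArithmeticFunction.abs_moebius_le_one (n := d)
        calc |((moebius d : ℤ) : ℝ)| = ((|moebius d| : ℤ) : ℝ) := by
              rw [Int.cast_abs]
        _ ≤ 1 := by exact_mod_cast this
      calc |((moebius d : ℤ):ℝ)| * |(((Nat.gcd (d^2) h).totient : ℕ):ℝ)| ≤ 1 * (h:ℝ) :=
            mul_le_mul hmu hg (abs_nonneg _) zero_le_one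
      _ = (h:ℝ) := one_mul _
    rw [abs_div, abs_of_nonneg (show (0:ℝ) ≤ ((d^2).totient : ℝ) by positivity),
      mul_one_div]
    exact div_le_div₀ (by positivity) hnum hrppos key
  · simp
    positivity

theorem f10_one (h : ℕ) (r : ℤ) (m : ℕ) : f10 h r m 1 = 1 := by
  rw [f10, if_pos]
  · norm_num
  · refine ⟨odd_one, Nat.gcd_one_left m, ?_⟩
    simp [Nat.gcd_one_left]

theorem f10_local (h : ℕ) (r : ℤ) (m : ℕ) {p : ℕ} (hp : p.Prime) :
    ∑' e, f10 h r m (p ^ e) = 1 + f10 h r m p := by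
  rw [tsum_eq_sum (s := {0, 1}) ?h]
  · rw [Finset.sum_insert (by norm_num), Finset.sum_singleton, pow_zero, pow_one,
      f10_one]
  case h =>
    intro e he
    simp only [Finset.mem_insert, Finset.mem_singleton] at he
    have h2 : 2 ≤ e := by omega
    have : ¬ Squarefree (p ^ e) := by
      intro hsq
      exact hp.one_lt.ne' (Nat.isUnit_iff.mp (hsq p (by
        rw [← pow_two]
        exact pow_dvd_pow p h2)) )
    rw [f10]
    split_ifs
    · rw [ArithmeticFunction.moebius_eq_zero_of_not_squarefree this]
      norm_num
    · rfl

theorem f10_key (h : ℕ) (hpos : 0 < h) (r : ℤ)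
    (hsf : Squarefree (Int.gcd r (h : ℤ))) (m : ℕ) (p : ℕ) :
    (if p.Prime ∧ Odd p ∧ ¬ p ∣ m * h then 1 - 1/((p:ℝ)*((p:ℝ)-1)) else 1)
      = Set.mulIndicator {q | Nat.Prime q} (fun q => ∑' e, f10 h r m (q ^ e)) p *
        (if p ∈ h.primeFactors.filter
            (fun q => Odd q ∧ ¬ q ∣ m ∧ ¬ q ^ 2 ∣ h ∧ (q:ℤ) ∣ r)
          then (1 - 1/(p:ℝ))⁻¹ else 1) := by
  by_cases hp : p.Prime
  · rw [Set.mulIndicator_of_mem (show p ∈ {q | Nat.Prime q} from hp), f10_local h r m hp]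
    have hp2 : (2:ℕ) ≤ p := hp.two_le
    have hpR : (1:ℝ) < p := by exact_mod_cast hp.one_lt
    by_cases hop : Odd p
    · by_cases hpm : p ∣ m
      · rw [if_neg (fun hc => hc.2.2 (hpm.mul_right h)),
          if_neg (fun hc => ((Finset.mem_filter.mp hc).2.2.1 hpm)), mul_one]
        rw [f10, if_neg (fun hc => ?_), add_zero]
        have := Nat.dvd_gcd dvd_rfl hpm
        rw [hc.2.1] at this
        exact hp.one_lt.ne' (Nat.eq_one_of_dvd_one this)
      · by_cases hph : p ∣ h
        · have hG2 : (if p.Prime ∧ Odd p ∧ ¬ p ∣ m * h then 1 - 1/((p:ℝ)*((p:ℝ)-1)) else 1)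
              = (1:ℝ) := if_neg (fun hc => hc.2.2 (hph.mul_left m))
          by_cases hp2h : p^2 ∣ h
          · have hg : Nat.gcd (p^2) h = p^2 :=
              Nat.dvd_antisymm (Nat.gcd_dvd_left _ _) (Nat.dvd_gcd dvd_rfl hp2h)
            rw [hG2, if_neg (fun hc => (Finset.mem_filter.mp hc).2.2.2.1 hp2h), mul_one,
              f10, if_neg (fun hc => ?_), add_zero]
            rw [hg] at hc
            have hdr := hc.2.2
            have hdg : (p^2 : ℕ) ∣ Int.gcd r (h:ℤ) := by
              apply Int.natCast_dvd_natCast.mp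
              exact_mod_cast Int.dvd_gcd hdr (by exact_mod_cast (Int.natCast_dvd_natCast.mpr hp2h))
            have := hsf p (by rw [← pow_two]; exact hdg)
            exact hp.one_lt.ne' (Nat.isUnit_iff.mp this)
          · have hg : Nat.gcd (p^2) h = p := by
              have hdvd : Nat.gcd (p^2) h ∣ p^2 := Nat.gcd_dvd_left _ _
              obtain ⟨i, hi, hgi⟩ := (Nat.dvd_prime_pow hp).mp hdvd
              have hpg : p ∣ Nat.gcd (p^2) h :=
                Nat.dvd_gcd (dvd_pow_self p two_ne_zero) hph
              interval_cases i
              · rw [hgi, pow_zero] at hpg ⊢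
                exact absurd (Nat.eq_one_of_dvd_one hpg) hp.one_lt.ne'
              · rw [hgi, pow_one]
              · rw [hgi] at hpg ⊢
                exact absurd (hgi ▸ Nat.gcd_dvd_right (p^2) h) hp2h
            by_cases hpr : (p : ℤ) ∣ r
            · have hmem : p ∈ h.primeFactors.filter
                  (fun q => Odd q ∧ ¬ q ∣ m ∧ ¬ q ^ 2 ∣ h ∧ (q:ℤ) ∣ r) :=
                Finset.mem_filter.mpr ⟨Nat.mem_primeFactors.mpr ⟨hp, hph, hpos.ne'⟩,
                  hop, hpm, hp2h, hpr⟩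
              rw [hG2, if_pos hmem, f10, if_pos ⟨hop, (hp.coprime_iff_not_dvd).mpr hpm, by
                rw [hg]; exact hpr⟩]
              rw [hg, totient_sq_eq, Nat.totient_prime hp,
                ArithmeticFunction.moebius_apply_prime hp]
              have h1R : (0:ℝ) < (p:ℝ) - 1 := by linarith
              have hcast : ((p * (p-1) : ℕ) : ℝ) = (p:ℝ) * ((p:ℝ) - 1) := by
                push_cast [Nat.cast_sub hp.one_le]; ring
              rw [hcast]
              push_cast [Nat.cast_sub hp.one_le]
              field_simp
              ring
            · rw [hG2, if_neg (fun hc => hpr (Finset.mem_filter.mp hc).2.2.2.2), mul_one,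
                f10, if_neg (fun hc => hpr (by rw [hg] at hc; exact hc.2.2)), add_zero]
        · have hg : Nat.gcd (p^2) h = 1 :=
            Nat.Coprime.pow_left 2 ((hp.coprime_iff_not_dvd).mpr hph)
          rw [if_pos ⟨hp, hop, fun hd => (hp.dvd_mul.mp hd).elim hpm hph⟩,
            if_neg (fun hc => hph (Nat.dvd_of_mem_primeFactors (Finset.mem_filter.mp hc).1)),
            mul_one, f10, if_pos ⟨hop, (hp.coprime_iff_not_dvd).mpr hpm, by rw [hg]; exact one_dvd r⟩]
          rw [hg, totient_sq_eq, Nat.totient_prime hp,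
            ArithmeticFunction.moebius_apply_prime hp, Nat.totient_one]
          push_cast [Nat.cast_sub hp.one_le]
          ring
    · rw [if_neg (fun hc => hop hc.2.1),
        if_neg (fun hc => hop (Finset.mem_filter.mp hc).2.1), mul_one,
        f10, if_neg (fun hc => hop hc.1), add_zero]
  · rw [Set.mulIndicator_of_notMem (show p ∉ {q | Nat.Prime q} from hp),
      if_neg (fun hc => hp hc.1),
      if_neg (fun hc => hp (Nat.prime_of_mem_primeFactors (Finset.mem_filter.mp hc).1)),
      one_mul]

/-- for `h` positive odd, `gcd(r,h)` squarefree and `m` a positive integer,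
`Σ_{d odd, (d,m)=1, (d²,h)|r} μ(d)·φ((d²,h))/φ(d²)
  = ∏_{p odd, p∤m, p∥h, p|r} (1 - 1/p) · ∏_{p odd prime, p∤mh} (1 - 1/(p(p-1)))`,
the series converging absolutely and the infinite product converging. -/
theorem stmt10 (h : ℕ) (hpos : 0 < h) (hodd : Odd h) (r : ℤ)
    (hsf : Squarefree (Int.gcd r (h : ℤ))) (m : ℕ) (hm : 0 < m) :
    Summable (fun d : ℕ =>
      |if Odd d ∧ Nat.gcd d m = 1 ∧ ((Nat.gcd (d ^ 2) h : ℤ) ∣ r) then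
          (ArithmeticFunction.moebius d : ℝ) * (Nat.totient (Nat.gcd (d ^ 2) h) : ℝ) /
            (Nat.totient (d ^ 2) : ℝ)
        else 0|) ∧
    Multipliable (fun p : ℕ =>
      if p.Prime ∧ Odd p ∧ ¬ p ∣ m * h then 1 - 1 / ((p : ℝ) * ((p : ℝ) - 1)) else 1) ∧
    (∑' d : ℕ,
        if Odd d ∧ Nat.gcd d m = 1 ∧ ((Nat.gcd (d ^ 2) h : ℤ) ∣ r) then
          (ArithmeticFunction.moebius d : ℝ) * (Nat.totient (Nat.gcd (d ^ 2) h) : ℝ) /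
            (Nat.totient (d ^ 2) : ℝ)
        else 0) =
      (∏ p ∈ h.primeFactors.filter
          (fun p => Odd p ∧ ¬ p ∣ m ∧ ¬ p ^ 2 ∣ h ∧ (p : ℤ) ∣ r),
          (1 - 1 / (p : ℝ))) *
        ∏' p : ℕ,
          (if p.Prime ∧ Odd p ∧ ¬ p ∣ m * h then 1 - 1 / ((p : ℝ) * ((p : ℝ) - 1))
            else 1) := by
  classical
  have hf₀ : f10 h r m 0 = 0 := by
    rw [f10, if_neg]
    rintro ⟨h0, -⟩
    simp at h0
  have hmul' : ∀ {a b : ℕ}, Nat.Coprime a b →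
      f10 h r m (a * b) = f10 h r m a * f10 h r m b := fun hab => f10_mul h r m hab
  have hsum : Summable (fun d => ‖f10 h r m d‖) := by
    simpa [Real.norm_eq_abs] using f10_summable h hpos r m
  have HP := EulerProduct.eulerProduct_hasProd_mulIndicator (f10_one h r m) hmul' hsum hf₀
  set D := h.primeFactors.filter
      (fun p => Odd p ∧ ¬ p ∣ m ∧ ¬ p ^ 2 ∣ h ∧ (p : ℤ) ∣ r) with hD
  have hCne : ∀ p ∈ D, (1 - 1/(p:ℝ)) ≠ 0 := by
    intro p hpD
    have hp := Nat.prime_of_mem_primeFactors (Finset.mem_filter.mp hpD).1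
    have hp1 : (1:ℝ) < p := by exact_mod_cast hp.one_lt
    have : (1:ℝ)/p < 1 := by rw [div_lt_one (by linarith)]; linarith
    intro hzero
    have := sub_eq_zero.mp hzero
    linarith
  have hC : HasProd (fun p : ℕ => if p ∈ D then (1 - 1/(p:ℝ))⁻¹ else 1)
      (∏ p ∈ D, (1 - 1/(p:ℝ))⁻¹) := by
    have h1 := hasProd_prod_of_ne_finset_one (s := D) (L := SummationFilter.unconditional ℕ)
        (f := fun p : ℕ => if p ∈ D then (1 - 1/(p:ℝ))⁻¹ else 1) (fun b hb => if_neg hb)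
    rwa [Finset.prod_congr rfl (fun p hp => if_pos hp)] at h1
  have hkey : (fun p : ℕ =>
        if p.Prime ∧ Odd p ∧ ¬ p ∣ m * h then 1 - 1 / ((p : ℝ) * ((p : ℝ) - 1)) else 1)
      = fun p : ℕ =>
        Set.mulIndicator {q | Nat.Prime q} (fun q => ∑' e, f10 h r m (q ^ e)) p *
          (if p ∈ D then (1 - 1/(p:ℝ))⁻¹ else 1) :=
    funext fun p => f10_key h hpos r hsf m p
  have hG2 : HasProd (fun p : ℕ =>
      if p.Prime ∧ Odd p ∧ ¬ p ∣ m * h then 1 - 1 / ((p : ℝ) * ((p : ℝ) - 1)) else 1)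
      ((∑' n, f10 h r m n) * ∏ p ∈ D, (1 - 1/(p:ℝ))⁻¹) := by
    rw [hkey]
    exact HP.mul hC
  refine ⟨f10_summable h hpos r m, hG2.multipliable, ?_⟩
  rw [hG2.tprod_eq]
  show ∑' n, f10 h r m n = _
  rw [show ∀ a b c : ℝ, b * (a * c) = a * (b * c) from fun a b c => by ring,
    ← Finset.prod_mul_distrib,
    Finset.prod_congr rfl (fun p hp => mul_inv_cancel₀ (hCne p hp)),
    Finset.prod_const_one, mul_one]
end

section
/- Let h be a positive odd integer, r an integer, and d a positive integer with gcd(d,h) = 1. Then for every real X ≥ 1, #{ t ∈ ℤ : 1 ≤ t ≤ X, t odd, gcd(d²t² − r, h) = 1 } = (X/2) · ∏_{p | h} ( 1 − (1 + (r|p))/p ) + O( τ(h) · 2^{ω(h)} ), where the product is over the primes p dividing h, (r|p) is the Legendre symbol (equal to 0 when p | r), τ(h) is the number of divisors of h, ω(h) is the number of distinct prime divisors of h, and the implied constant is absolute. -/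
open Finset ArithmeticFunction


noncomputable def rho (d : ℕ) (r : ℤ) (m : ℕ) : ℕ :=
  Nat.card {t : ZMod m // (d : ZMod m) ^ 2 * t ^ 2 = (r : ZMod m)}

lemma rho_one (d : ℕ) (r : ℤ) : rho d r 1 = 1 := by
  have h : ∀ t : ZMod 1, (d : ZMod 1) ^ 2 * t ^ 2 = (r : ZMod 1) := fun t =>
    Subsingleton.elim _ _
  rw [rho, Nat.card_congr (Equiv.subtypeUnivEquiv h), Nat.card_zmod]

lemma rho_mul (d : ℕ) (r : ℤ) {m n : ℕ} (hmn : Nat.Coprime m n) :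
    rho d r (m * n) = rho d r m * rho d r n := by
  classical
  let e := ZMod.chineseRemainder hmn
  have key : ∀ t : ZMod (m * n),
      ((d : ZMod (m*n))^2 * t^2 = (r : ZMod (m*n))) ↔
      ((d : ZMod m)^2 * (e t).1^2 = (r : ZMod m) ∧
        (d : ZMod n)^2 * (e t).2^2 = (r : ZMod n)) := by
    intro t
    rw [← e.injective.eq_iff, map_mul, map_pow, map_pow, map_natCast, map_intCast,
      Prod.ext_iff]
    simp [Prod.pow_def]
  have E : {t : ZMod (m*n) // (d : ZMod (m*n))^2 * t^2 = (r : ZMod (m*n))} ≃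
      {x : ZMod m × ZMod n // ((d : ZMod m)^2 * x.1^2 = (r : ZMod m)) ∧
        ((d : ZMod n)^2 * x.2^2 = (r : ZMod n))} := e.toEquiv.subtypeEquiv key
  rw [rho, Nat.card_congr (E.trans (Equiv.subtypeProdEquivProd
    (p := fun a : ZMod m => (d : ZMod m)^2 * a^2 = (r : ZMod m))
    (q := fun b : ZMod n => (d : ZMod n)^2 * b^2 = (r : ZMod n)))), Nat.card_prod]
  rfl


lemma rho_prime (d : ℕ) (r : ℤ) {p : ℕ} (hp : p.Prime) (hp2 : p ≠ 2) (hd : ¬ p ∣ d) :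
    (rho d r p : ℤ) = jacobiSym r p + 1 := by
  haveI : Fact p.Prime := ⟨hp⟩
  have hdp : (d : ZMod p) ≠ 0 := by
    rw [Ne, ZMod.natCast_eq_zero_iff]; exact hd
  have E : {t : ZMod p // (d : ZMod p)^2 * t^2 = (r : ZMod p)} ≃
      {x : ZMod p // x^2 = (r : ZMod p)} :=
    { toFun := fun t => ⟨(d : ZMod p) * t.1, by rw [mul_pow]; exact t.2⟩
      invFun := fun x => ⟨(d : ZMod p)⁻¹ * x.1, by
        have h : (d : ZMod p)^2 * ((d : ZMod p)⁻¹ * x.1)^2 = x.1^2 := by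
          field_simp
        rw [h, x.2]⟩
      left_inv := fun t => Subtype.ext (inv_mul_cancel_left₀ hdp t.1)
      right_inv := fun x => Subtype.ext (mul_inv_cancel_left₀ hdp x.1) }
  have hcard := legendreSym.card_sqrts (p := p) hp2 r
  rw [rho, Nat.card_congr E, Nat.card_eq_fintype_card, ← jacobiSym.legendreSym.to_jacobiSym, ← hcard,
    Set.toFinset_card]
  rfl


lemma rho_prod (d : ℕ) (r : ℤ) (s : Finset ℕ) (hs : ∀ p ∈ s, p.Prime) :
    rho d r (∏ p ∈ s, p) = ∏ p ∈ s, rho d r p := by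
  classical
  induction s using Finset.induction_on with
  | empty => simpa using rho_one d r
  | @insert p s' hp ih =>
    rw [prod_insert hp, prod_insert hp, rho_mul d r ?_,
      ih (fun q hq => hs q (mem_insert_of_mem hq))]
    exact Nat.Coprime.prod_right fun q hq =>
      (Nat.coprime_primes (hs p (mem_insert_self p s')) (hs q (mem_insert_of_mem hq))).mpr
        (fun hpq => hp (hpq ▸ hq))

section Count
variable {q : ℕ} [NeZero q] (P : ZMod q → Prop) [DecidablePred P]

lemma full_period (hq : 0 < q) (M : ℕ) :
    ((Finset.Ioc M (M + q)).filter (fun t : ℕ => P (t : ZMod q))).card =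
      (Finset.univ.filter P).card := by
  have hinj : Set.InjOn (fun t : ℕ => (t : ZMod q)) (Finset.Ioc M (M + q)) := by
    intro a ha b hb hab
    simp only [coe_Ioc, Set.mem_Ioc] at ha hb
    have h1 : a ≡ b [MOD q] := (ZMod.natCast_eq_natCast_iff a b q).mp hab
    have h2 : a - (M + 1) ≡ b - (M + 1) [MOD q] := by
      have ha' : a - (M + 1) + (M + 1) = a := Nat.sub_add_cancel ha.1
      have hb' : b - (M + 1) + (M + 1) = b := Nat.sub_add_cancel hb.1
      apply Nat.ModEq.add_right_cancel' (M + 1)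
      rwa [ha', hb']
    have h3 : a - (M + 1) < q := by omega
    have h4 : b - (M + 1) < q := by omega
    have := Nat.ModEq.eq_of_lt_of_lt h2 h3 h4
    omega
  have hcard : (Finset.Ioc M (M + q)).card = q := by simp
  have himg : (Finset.Ioc M (M + q)).image (fun t : ℕ => (t : ZMod q)) = Finset.univ := by
    apply Finset.eq_univ_of_card
    rw [Finset.card_image_of_injOn hinj, hcard, ZMod.card]
  calc ((Finset.Ioc M (M + q)).filter (fun t : ℕ => P (t : ZMod q))).card
      = (((Finset.Ioc M (M + q)).filter (fun t : ℕ => P (t : ZMod q))).image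
          (fun t : ℕ => (t : ZMod q))).card := by
        rw [Finset.card_image_of_injOn (hinj.mono (Finset.filter_subset _ _))]
    _ = ((Finset.univ.filter P)).card := by rw [← Finset.filter_image, himg]

lemma count_split (hq : 0 < q) (k s : ℕ) :
    ((Finset.Icc 1 (q * k + s)).filter (fun t : ℕ => P (t : ZMod q))).card =
      k * (Finset.univ.filter P).card +
        ((Finset.Icc 1 s).filter (fun t : ℕ => P (t : ZMod q))).card := by
  induction k with
  | zero => simp
  | succ k ih =>
    have hM : Finset.Icc 1 (q * (k + 1) + s) =
        Finset.Icc 1 (q * k + s) ∪ Finset.Ioc (q * k + s) (q * k + s + q) := by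
      have hqk : q * (k + 1) = q * k + q := by ring
      ext t
      simp only [Finset.mem_union, Finset.mem_Icc, Finset.mem_Ioc, hqk]
      omega
    have hdisj : Disjoint (Finset.Icc 1 (q * k + s))
        (Finset.Ioc (q * k + s) (q * k + s + q)) := by
      rw [Finset.disjoint_left]
      intro t ht ht'
      simp only [Finset.mem_Icc] at ht
      simp only [Finset.mem_Ioc] at ht'
      omega
    rw [hM, Finset.filter_union, Finset.card_union_of_disjoint
      (Finset.disjoint_filter_filter hdisj), ih, full_period P hq]
    ring

lemma count_le (hq : 0 < q) {s : ℕ} (hs : s ≤ q) :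
    ((Finset.Icc 1 s).filter (fun t : ℕ => P (t : ZMod q))).card ≤
      (Finset.univ.filter P).card := by
  have := full_period P hq 0
  rw [zero_add] at this
  rw [← this]
  apply Finset.card_le_card
  apply Finset.filter_subset_filter
  intro t ht
  simp only [Finset.mem_Icc] at ht
  simp only [Finset.mem_Ioc]
  omega

lemma count_est (hq : 0 < q) (N : ℕ) :
    |(((Finset.Icc 1 N).filter (fun t : ℕ => P (t : ZMod q))).card : ℝ) -
      (N : ℝ) * (Finset.univ.filter P).card / q| ≤ (Finset.univ.filter P).card := by
  obtain ⟨k, s, hks, hsq⟩ : ∃ k s, N = q * k + s ∧ s < q :=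
    ⟨N / q, N % q, by rw [Nat.div_add_mod], Nat.mod_lt _ hq⟩
  subst hks
  rw [count_split P hq k s]
  have hFs := count_le P hq hsq.le
  have hq' : (0:ℝ) < q := by exact_mod_cast hq
  have hsB : (s : ℝ) * (Finset.univ.filter P).card / q ≤ (Finset.univ.filter P).card := by
    rw [div_le_iff₀ hq']
    have : (s:ℝ) ≤ q := by exact_mod_cast hsq.le
    nlinarith [Nat.cast_nonneg (α := ℝ) (Finset.univ.filter P).card]
  have hexp : ((q * k + s : ℕ) : ℝ) * (Finset.univ.filter P).card / q =
      (k : ℝ) * (Finset.univ.filter P).card + (s : ℝ) * (Finset.univ.filter P).card / q := by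
    field_simp
    push_cast
    ring
  rw [hexp]
  push_cast
  rw [abs_le]
  constructor
  · have : (0:ℝ) ≤ ((Finset.Icc 1 s).filter (fun t : ℕ => P (t : ZMod q))).card :=
      Nat.cast_nonneg _
    nlinarith
  · have : (((Finset.Icc 1 s).filter (fun t : ℕ => P (t : ZMod q))).card : ℝ) ≤
        (Finset.univ.filter P).card := by exact_mod_cast hFs
    have h0 : (0:ℝ) ≤ (s : ℝ) * (Finset.univ.filter P).card / q := by positivity
    nlinarith

end Count


lemma sqfree_prod_primes (s : Finset ℕ) (hs : ∀ p ∈ s, p.Prime) :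
    Squarefree (∏ p ∈ s, p) := by
  classical
  induction s using Finset.induction_on with
  | empty => simpa using Nat.squarefree_one
  | @insert p s' hp ih =>
    rw [prod_insert hp]
    have hcop : Nat.Coprime p (∏ q ∈ s', q) := Nat.Coprime.prod_right fun q hq =>
      (Nat.coprime_primes (hs p (mem_insert_self p s')) (hs q (mem_insert_of_mem hq))).mpr
        (fun hpq => hp (hpq ▸ hq))
    rw [Nat.squarefree_mul hcop]
    exact ⟨(hs p (mem_insert_self p s')).squarefree,
      ih (fun q hq => hs q (mem_insert_of_mem hq))⟩

lemma mainterm (d h : ℕ) (r : ℤ) (hh : h ≠ 0) :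
    ∑ e ∈ h.divisors, (moebius e : ℝ) * ((rho d r e : ℝ) / e) =
      ∏ p ∈ h.primeFactors, (1 - (rho d r p : ℝ) / p) := by
  classical
  set F : ArithmeticFunction ℝ :=
    ⟨fun m => if m = 0 then 0 else (rho d r m : ℝ) / m, by simp⟩ with hFdef
  have hFapp : ∀ m : ℕ, m ≠ 0 → F m = (rho d r m : ℝ) / m := by
    intro m hm; simp [hFdef, ArithmeticFunction.coe_mk, hm]
  have hF : F.IsMultiplicative := by
    rw [ArithmeticFunction.IsMultiplicative.iff_ne_zero]
    constructor
    · rw [hFapp 1 one_ne_zero, rho_one]; simp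
    · intro m n hm hn hmn
      rw [hFapp _ (mul_ne_zero hm hn), hFapp _ hm, hFapp _ hn, rho_mul d r hmn]
      push_cast
      rw [mul_div_mul_comm]
  set h' := ∏ p ∈ h.primeFactors, p with hh'def
  have hprimes : ∀ p ∈ h.primeFactors, p.Prime := fun p hp => Nat.prime_of_mem_primeFactors hp
  have hsq : Squarefree h' := sqfree_prod_primes _ hprimes
  have hpf : h'.primeFactors = h.primeFactors := Nat.primeFactors_prod hprimes
  have key := ArithmeticFunction.IsMultiplicative.prodPrimeFactors_one_sub_of_squarefree F hF hsq
  have hdiveq : h'.divisors = h.divisors.filter Squarefree := by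
    ext e
    simp only [Nat.mem_divisors, Finset.mem_filter]
    constructor
    · intro ⟨he, _⟩
      exact ⟨⟨he.trans (Nat.prod_primeFactors_dvd h), hh⟩, hsq.squarefree_of_dvd he⟩
    · intro ⟨⟨he, _⟩, hesq⟩
      refine ⟨?_, hsq.ne_zero⟩
      rw [← Nat.prod_primeFactors_of_squarefree hesq]
      exact Finset.prod_dvd_prod_of_subset _ _ _ (Nat.primeFactors_mono he hh)
  have hsum : ∑ e ∈ h'.divisors, (moebius e : ℝ) * F e =
      ∑ e ∈ h.divisors, (moebius e : ℝ) * F e := by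
    rw [hdiveq]
    exact Finset.sum_filter_of_ne fun e he hne => by
      by_contra hesq
      rw [moebius_eq_zero_of_not_squarefree hesq] at hne
      simp at hne
  calc ∑ e ∈ h.divisors, (moebius e : ℝ) * ((rho d r e : ℝ) / e)
      = ∑ e ∈ h.divisors, (moebius e : ℝ) * F e := by
        refine Finset.sum_congr rfl fun e he => ?_
        rw [hFapp e (Nat.pos_of_mem_divisors he).ne']
    _ = ∑ e ∈ h'.divisors, (moebius e : ℝ) * F e := hsum.symm
    _ = ∏ p ∈ h'.primeFactors, (1 - F p) := key.symm
    _ = ∏ p ∈ h.primeFactors, (1 - (rho d r p : ℝ) / p) := by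
        rw [hpf]
        refine Finset.prod_congr rfl fun p hp => ?_
        rw [hFapp p (hprimes p hp).ne_zero]


def Pred (d e : ℕ) (r : ℤ) (x : ZMod (2 * e)) : Prop :=
  ZMod.castHom (dvd_mul_right 2 e) (ZMod 2) x = 1 ∧
    (d : ZMod e) ^ 2 * (ZMod.castHom (dvd_mul_left e 2) (ZMod e) x) ^ 2 = (r : ZMod e)

lemma claimA (d e : ℕ) (r : ℤ) (t : ℕ) :
    (Odd t ∧ (e : ℤ) ∣ ((d : ℤ) ^ 2 * (t : ℤ) ^ 2 - r)) ↔ Pred d e r (t : ZMod (2 * e)) := by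
  unfold Pred
  rw [map_natCast, map_natCast]
  constructor
  · rintro ⟨hodd, hdvd⟩
    constructor
    · have h1 : t % 2 = 1 := Nat.odd_iff.mp hodd
      rw [← ZMod.natCast_mod t 2, h1, Nat.cast_one]
    · have := (ZMod.intCast_zmod_eq_zero_iff_dvd ((d : ℤ) ^ 2 * (t : ℤ) ^ 2 - r) e).mpr hdvd
      push_cast at this
      rw [sub_eq_zero] at this
      exact this
  · rintro ⟨h1, h2⟩
    constructor
    · rw [Nat.odd_iff]
      by_contra h
      have h0 : t % 2 = 0 := by omega
      rw [← ZMod.natCast_mod t 2, h0, Nat.cast_zero] at h1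
      exact one_ne_zero h1.symm
    · rw [← ZMod.intCast_zmod_eq_zero_iff_dvd]
      push_cast
      rw [sub_eq_zero]
      exact h2

lemma claimB (d e : ℕ) (r : ℤ) (he : 0 < e) (heodd : Odd e) [NeZero (2 * e)]
    [DecidablePred (Pred d e r)] :
    (Finset.univ.filter (Pred d e r)).card = rho d r e := by
  haveI : NeZero e := ⟨he.ne'⟩
  have c2e : Nat.Coprime 2 e := Nat.coprime_two_left.mpr heodd
  let crt := ZMod.chineseRemainder c2e
  have h1 : ∀ x : ZMod (2 * e),
      ZMod.castHom (dvd_mul_right 2 e) (ZMod 2) x = (crt x).1 := by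
    intro x
    exact RingHom.congr_fun (RingHom.ext_zmod (ZMod.castHom (dvd_mul_right 2 e) (ZMod 2))
      ((RingHom.fst (ZMod 2) (ZMod e)).comp (crt : ZMod (2 * e) →+* ZMod 2 × ZMod e))) x
  have h2 : ∀ x : ZMod (2 * e),
      ZMod.castHom (dvd_mul_left e 2) (ZMod e) x = (crt x).2 := by
    intro x
    exact RingHom.congr_fun (RingHom.ext_zmod (ZMod.castHom (dvd_mul_left e 2) (ZMod e))
      ((RingHom.snd (ZMod 2) (ZMod e)).comp (crt : ZMod (2 * e) →+* ZMod 2 × ZMod e))) x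
  have hiff : ∀ x : ZMod (2 * e), Pred d e r x ↔
      ((crt x).1 = 1 ∧ (d : ZMod e) ^ 2 * ((crt x).2) ^ 2 = (r : ZMod e)) := by
    intro x
    unfold Pred
    rw [h1 x, h2 x]
  have E : {x : ZMod (2 * e) // Pred d e r x} ≃
      {y : ZMod 2 × ZMod e // (y.1 = 1) ∧ ((d : ZMod e) ^ 2 * y.2 ^ 2 = (r : ZMod e))} :=
    crt.toEquiv.subtypeEquiv hiff
  have E2 := E.trans (Equiv.subtypeProdEquivProd
    (p := fun a : ZMod 2 => a = 1)
    (q := fun b : ZMod e => (d : ZMod e) ^ 2 * b ^ 2 = (r : ZMod e)))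
  calc (Finset.univ.filter (Pred d e r)).card
      = Fintype.card {x : ZMod (2 * e) // Pred d e r x} := (Fintype.card_subtype _).symm
    _ = Nat.card {x : ZMod (2 * e) // Pred d e r x} := (Nat.card_eq_fintype_card).symm
    _ = Nat.card ({a : ZMod 2 // a = 1} × {b : ZMod e // (d : ZMod e) ^ 2 * b ^ 2 = (r : ZMod e)}) :=
        Nat.card_congr E2
    _ = rho d r e := by
        rw [Nat.card_prod, rho]
        have : Nat.card {a : ZMod 2 // a = 1} = 1 := by
          rw [Nat.card_eq_fintype_card, Fintype.card_subtype_eq]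
        rw [this, one_mul]

/-- helper: conditions at primes dividing h -/
lemma rho_prime_cond (d h p : ℕ) (r : ℤ) (hodd : Odd h) (hgcd : Nat.gcd d h = 1)
    (hp : p ∈ h.primeFactors) : (rho d r p : ℤ) = jacobiSym r p + 1 := by
  have hpp := Nat.prime_of_mem_primeFactors hp
  have hph := Nat.dvd_of_mem_primeFactors hp
  have hp2 : p ≠ 2 := by
    rintro rfl
    have h2 : h % 2 = 1 := Nat.odd_iff.mp hodd
    omega
  have hpd : ¬ p ∣ d := by
    intro hdvd
    have : p ∣ Nat.gcd d h := Nat.dvd_gcd hdvd hph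
    rw [hgcd] at this
    exact hpp.ne_one (Nat.dvd_one.mp this)
  exact rho_prime d r hpp hp2 hpd

/-- for `h` positive odd, `r` an integer and `d` positive with `gcd(d,h)=1`,
the number of odd `1 ≤ t ≤ X` with `gcd(d²t² - r, h) = 1` is
`(X/2)·∏_{p | h}(1 - (1+(r|p))/p) + O(τ(h)·2^{ω(h)})`, with an absolute implied
constant. -/
theorem stmt12 :
    ∃ C : ℝ, ∀ (h : ℕ), 0 < h → Odd h → ∀ (r : ℤ) (d : ℕ), 0 < d → Nat.gcd d h = 1 →
      ∀ X : ℝ, 1 ≤ X →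
        |(((Finset.Icc 1 ⌊X⌋₊).filter
              (fun t : ℕ => Odd t ∧
                Int.gcd ((d : ℤ) ^ 2 * (t : ℤ) ^ 2 - r) (h : ℤ) = 1)).card : ℝ) -
            X / 2 * ∏ p ∈ h.primeFactors, (1 - (1 + (jacobiSym r p : ℝ)) / (p : ℝ))| ≤
          C * (h.divisors.card : ℝ) * 2 ^ h.primeFactors.card := by
  classical
  use 2
  intro h hh hodd r d hd hgcd X hX
  set N := ⌊X⌋₊ with hN
  set v : ℕ → ℤ := fun t => (d : ℤ) ^ 2 * (t : ℤ) ^ 2 - r with hv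
  set S : ℕ → ℕ := fun e =>
    ((Finset.Icc 1 N).filter (fun t : ℕ => Odd t ∧ (e : ℤ) ∣ v t)).card with hS
  -- Step 1: exact identity over ℤ
  have key_t : ∀ t : ℕ, (if Int.gcd (v t) (h : ℤ) = 1 then (1 : ℤ) else 0) =
      ∑ e ∈ h.divisors, (if (e : ℤ) ∣ v t then moebius e else 0) := by
    intro t
    have hgcd0 : Nat.gcd ((v t).natAbs) h ≠ 0 := fun hz =>
      hh.ne' (Nat.eq_zero_of_gcd_eq_zero_right hz)
    have hdiv : h.divisors.filter (fun e : ℕ => (e : ℤ) ∣ v t) =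
        (Nat.gcd ((v t).natAbs) h).divisors := by
      ext a
      simp only [Nat.mem_divisors, Finset.mem_filter, Nat.dvd_gcd_iff, Int.natCast_dvd]
      constructor
      · rintro ⟨⟨hah, _⟩, hav⟩
        exact ⟨⟨hav, hah⟩, hgcd0⟩
      · rintro ⟨⟨hav, hah⟩, _⟩
        exact ⟨⟨hah, hh.ne'⟩, hav⟩
    rw [← Finset.sum_filter, hdiv]
    have hmz : ∑ e ∈ (Nat.gcd ((v t).natAbs) h).divisors, moebius e =
        if Nat.gcd ((v t).natAbs) h = 1 then 1 else 0 := by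
      have h1 : (moebius * (zeta : ArithmeticFunction ℕ)) ((v t).natAbs.gcd h) =
          (1 : ArithmeticFunction ℤ) ((v t).natAbs.gcd h) := by
        rw [ArithmeticFunction.moebius_mul_coe_zeta]
      rwa [ArithmeticFunction.coe_mul_zeta_apply, ArithmeticFunction.one_apply] at h1
    rw [hmz]
    have hiff : Int.gcd (v t) (h : ℤ) = Nat.gcd ((v t).natAbs) h := by
      simp [Int.gcd, Int.natAbs_natCast]
    rw [hiff]
  have hcount : ((((Finset.Icc 1 N).filter
        (fun t : ℕ => Odd t ∧ Int.gcd (v t) (h : ℤ) = 1)).card : ℤ)) =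
      ∑ e ∈ h.divisors, moebius e * (S e : ℤ) := by
    have hsplit : (Finset.Icc 1 N).filter (fun t : ℕ => Odd t ∧ Int.gcd (v t) (h : ℤ) = 1) =
        ((Finset.Icc 1 N).filter (fun t : ℕ => Odd t)).filter
          (fun t => Int.gcd (v t) (h : ℤ) = 1) := by
      rw [Finset.filter_filter]
    rw [hsplit, Finset.card_filter]
    push_cast
    rw [Finset.sum_congr rfl (fun t _ => key_t t), Finset.sum_comm]
    refine Finset.sum_congr rfl fun e he => ?_
    rw [← Finset.sum_filter, Finset.sum_const, Finset.filter_filter, nsmul_eq_mul, mul_comm]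
  -- Step 2: rho at primes vs jacobi
  have hjac : ∀ p ∈ h.primeFactors, (rho d r p : ℝ) = 1 + (jacobiSym r p : ℝ) := by
    intro p hp
    have h1 := rho_prime_cond d h p r hodd hgcd hp
    have h2 : ((rho d r p : ℤ) : ℝ) = ((jacobiSym r p + 1 : ℤ) : ℝ) := by rw [h1]
    push_cast at h2
    linarith
  have hmain : X / 2 * ∏ p ∈ h.primeFactors, (1 - (1 + (jacobiSym r p : ℝ)) / p)
      = ∑ e ∈ h.divisors, (moebius e : ℝ) * (X * (rho d r e) / (2 * e)) := by
    have hpr : ∏ p ∈ h.primeFactors, (1 - (1 + (jacobiSym r p : ℝ)) / p)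
        = ∏ p ∈ h.primeFactors, (1 - (rho d r p : ℝ) / p) :=
      Finset.prod_congr rfl fun p hp => by rw [hjac p hp]
    rw [hpr, ← mainterm d h r hh.ne', Finset.mul_sum]
    refine Finset.sum_congr rfl fun e he => ?_
    have he0 : (e : ℝ) ≠ 0 := Nat.cast_ne_zero.mpr (Nat.pos_of_mem_divisors he).ne'
    field_simp
  -- Step 3: per-divisor estimate
  have hest : ∀ e ∈ h.divisors,
      |(S e : ℝ) - X * (rho d r e) / (2 * e)| ≤ 2 * (rho d r e) := by
    intro e he
    have hedvd : e ∣ h := Nat.dvd_of_mem_divisors he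
    have he0 : 0 < e := Nat.pos_of_mem_divisors he
    have heodd : Odd e := Nat.coprime_two_left.mp
      ((Nat.coprime_two_left.mpr hodd).coprime_dvd_right hedvd)
    haveI : NeZero (2 * e) := ⟨by omega⟩
    have hq : 0 < 2 * e := by omega
    have hSe : (S e : ℝ) = (((Finset.Icc 1 N).filter
        (fun t : ℕ => Pred d e r (t : ZMod (2 * e)))).card : ℝ) := by
      have hfe : ((Finset.Icc 1 N).filter (fun t : ℕ => Odd t ∧ (e : ℤ) ∣ v t))
          = ((Finset.Icc 1 N).filter (fun t : ℕ => Pred d e r (t : ZMod (2 * e)))) := by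
        refine Finset.filter_congr fun t _ => ?_
        simp only [hv]
        exact claimA d e r t
      congr 1
      show ((Finset.Icc 1 N).filter (fun t : ℕ => Odd t ∧ (e : ℤ) ∣ v t)).card = _
      rw [hfe]
    have hB := claimB d e r he0 heodd
    have h1 := count_est (Pred d e r) hq N
    rw [hB] at h1
    push_cast at h1
    rw [hSe]
    have hNX1 : (N : ℝ) ≤ X := Nat.floor_le (by linarith)
    have hNX2 : X ≤ (N : ℝ) + 1 := (Nat.lt_floor_add_one X).le
    have hq1 : (1 : ℝ) ≤ 2 * (e : ℝ) := by
      have : (1 : ℝ) ≤ (e : ℝ) := by exact_mod_cast he0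
      linarith
    have hr0 : (0 : ℝ) ≤ (rho d r e : ℝ) := Nat.cast_nonneg _
    have h3 : |(N : ℝ) * (rho d r e) / (2 * e) - X * (rho d r e) / (2 * e)|
        ≤ (rho d r e : ℝ) := by
      have heq : (N : ℝ) * (rho d r e) / (2 * e) - X * (rho d r e) / (2 * e)
          = ((N : ℝ) - X) * ((rho d r e : ℝ) / (2 * e)) := by ring
      rw [heq, abs_mul]
      have ha1 : |(N : ℝ) - X| ≤ 1 := abs_le.mpr ⟨by linarith, by linarith⟩
      have ha2 : |(rho d r e : ℝ) / (2 * e)| = (rho d r e : ℝ) / (2 * e) :=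
        abs_of_nonneg (by positivity)
      rw [ha2]
      have ha3 : (rho d r e : ℝ) / (2 * e) ≤ (rho d r e : ℝ) := div_le_self hr0 hq1
      have ha4 : (0 : ℝ) ≤ (rho d r e : ℝ) / (2 * e) := by positivity
      calc |(N : ℝ) - X| * ((rho d r e : ℝ) / (2 * e))
          ≤ 1 * ((rho d r e : ℝ) / (2 * e)) := mul_le_mul_of_nonneg_right ha1 ha4
        _ = (rho d r e : ℝ) / (2 * e) := one_mul _
        _ ≤ (rho d r e : ℝ) := ha3
    calc |(((Finset.Icc 1 N).filter
          (fun t : ℕ => Pred d e r (t : ZMod (2 * e)))).card : ℝ)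
          - X * (rho d r e) / (2 * e)|
        ≤ |(((Finset.Icc 1 N).filter
            (fun t : ℕ => Pred d e r (t : ZMod (2 * e)))).card : ℝ)
            - (N : ℝ) * (rho d r e) / (2 * e)|
          + |(N : ℝ) * (rho d r e) / (2 * e) - X * (rho d r e) / (2 * e)| :=
          abs_sub_le _ _ _
      _ ≤ (rho d r e : ℝ) + (rho d r e : ℝ) := add_le_add h1 h3
      _ = 2 * (rho d r e : ℝ) := by ring
  -- Step 4: rho bound for squarefree divisors
  have hrb : ∀ e ∈ h.divisors, Squarefree e →
      (rho d r e : ℝ) ≤ 2 ^ h.primeFactors.card := by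
    intro e he hesq
    have hedvd := Nat.dvd_of_mem_divisors he
    have hn : rho d r e ≤ 2 ^ h.primeFactors.card := by
      have h1 : rho d r e = ∏ p ∈ e.primeFactors, rho d r p := by
        conv_lhs => rw [← Nat.prod_primeFactors_of_squarefree hesq]
        exact rho_prod d r _ fun p hp => Nat.prime_of_mem_primeFactors hp
      have h2 : ∀ p ∈ e.primeFactors, rho d r p ≤ 2 := by
        intro p hp
        have hph : p ∈ h.primeFactors := Nat.primeFactors_mono hedvd hh.ne' hp
        have h3 := rho_prime_cond d h p r hodd hgcd hph
        rcases jacobiSym.trichotomy r p with hj | hj | hj <;> rw [hj] at h3 <;> omega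
      calc rho d r e = ∏ p ∈ e.primeFactors, rho d r p := h1
        _ ≤ ∏ _p ∈ e.primeFactors, 2 := Finset.prod_le_prod' h2
        _ = 2 ^ e.primeFactors.card := by rw [Finset.prod_const]
        _ ≤ 2 ^ h.primeFactors.card := Nat.pow_le_pow_right (by norm_num)
            (Finset.card_le_card (Nat.primeFactors_mono hedvd hh.ne'))
    calc (rho d r e : ℝ) ≤ ((2 ^ h.primeFactors.card : ℕ) : ℝ) := by exact_mod_cast hn
      _ = 2 ^ h.primeFactors.card := by push_cast; ring
  -- Step 5: conclusion
  have hcast : ((((Finset.Icc 1 N).filter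
      (fun t : ℕ => Odd t ∧ Int.gcd (v t) (h : ℤ) = 1)).card : ℝ))
      = ∑ e ∈ h.divisors, (moebius e : ℝ) * (S e : ℝ) := by exact_mod_cast hcount
  rw [hcast, hmain, ← Finset.sum_sub_distrib]
  calc |∑ e ∈ h.divisors, ((moebius e : ℝ) * (S e : ℝ)
        - (moebius e : ℝ) * (X * (rho d r e) / (2 * e)))|
      ≤ ∑ e ∈ h.divisors, |(moebius e : ℝ) * (S e : ℝ)
        - (moebius e : ℝ) * (X * (rho d r e) / (2 * e))| :=
        Finset.abs_sum_le_sum_abs _ _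
    _ ≤ ∑ _e ∈ h.divisors, 2 * (2 : ℝ) ^ h.primeFactors.card := by
        refine Finset.sum_le_sum fun e he => ?_
        rw [← mul_sub, abs_mul]
        by_cases hesq : Squarefree e
        · have hmu : |(moebius e : ℝ)| ≤ 1 := by
            rw [moebius_apply_of_squarefree hesq]
            push_cast
            rw [abs_pow, abs_neg, abs_one, one_pow]
          have h4 := hest e he
          have h5 := hrb e he hesq
          calc |(moebius e : ℝ)| * |(S e : ℝ) - X * (rho d r e) / (2 * e)|
              ≤ 1 * (2 * (rho d r e : ℝ)) :=
                mul_le_mul hmu h4 (abs_nonneg _) zero_le_one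
            _ = 2 * (rho d r e : ℝ) := one_mul _
            _ ≤ 2 * (2 : ℝ) ^ h.primeFactors.card := by linarith
        · rw [moebius_eq_zero_of_not_squarefree hesq]
          simp only [Int.cast_zero, abs_zero, zero_mul]
          positivity
    _ = (h.divisors.card : ℝ) * (2 * (2 : ℝ) ^ h.primeFactors.card) := by
        rw [Finset.sum_const, nsmul_eq_mul]
    _ = 2 * (h.divisors.card : ℝ) * 2 ^ h.primeFactors.card := by ring
end

section
/- Let h be a positive odd integer and r an integer such that gcd(r,h) is squarefree. Then (1/3) · P(r,h) · ∏_{p | h, p odd} ( 1 − (1 + (r|p))/p ) · ∏_{p odd prime, p ∤ h} ( 1 + G(p)/p ) = 𝔠(r,h), where all infinite products converge. -/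
noncomputable section

/-- The local factor at `ℓ` of the constant `𝔠(r,h)`; it is `1` unless `ℓ` is an odd prime. -/
noncomputable def locC (r : ℤ) (h : ℕ) (ℓ : ℕ) : ℝ :=
  if ℓ.Prime ∧ ℓ ≠ 2 then
    if ℓ ∣ h then
      if (ℓ : ℤ) ∣ r then
        (if ¬ (ℓ ^ 2 ∣ h) then ((ℓ : ℝ) - 1) / (ℓ : ℝ) else 1)
      else ((ℓ : ℝ) * ((ℓ : ℝ) - 1 - (jacobiSym r ℓ : ℝ))) /
        (((ℓ : ℝ) - 1) * ((ℓ : ℝ) - (jacobiSym r ℓ : ℝ)))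
    else ((ℓ : ℝ) ^ 4 - 2 * (ℓ : ℝ) ^ 2 - (ℓ : ℝ) + 1) / ((ℓ : ℝ) ^ 2 * ((ℓ : ℝ) ^ 2 - 1))
  else 1

/-- The constant `𝔠(r,h)` of David--Jiménez Urroz. -/
noncomputable def frakC (r : ℤ) (h : ℕ) : ℝ := (1 / (3 * (h : ℝ))) * ∏' ℓ : ℕ, locC r h ℓ

/-- The local factor at `p` of the constant `P(r,h)`; it is `1` unless `p` is an odd prime. -/
noncomputable def Pfac (r : ℤ) (h : ℕ) (p : ℕ) : ℝ :=
  if p.Prime ∧ p ≠ 2 then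
    if p ∣ h then
      ((p : ℝ) / ((p : ℝ) - (jacobiSym r p : ℝ))) *
        (if ¬ (p ^ 2 ∣ h) ∧ (p : ℤ) ∣ r then 1 - 1 / (p : ℝ) else 1)
    else ((p : ℝ) ^ 4 - (p : ℝ) ^ 3 - 2 * (p : ℝ) ^ 2 - (p : ℝ) + 1) /
      ((p : ℝ) * ((p : ℝ) - 1) * ((p : ℝ) ^ 2 - 1))
  else 1

/-- The constant `P(r,h)`. -/
noncomputable def Pconst (r : ℤ) (h : ℕ) : ℝ :=
  (1 / (Nat.totient h : ℝ)) * ∏' p : ℕ, Pfac r h p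

/-- `G(p) = (2p²+p-1)/(p⁴-p³-2p²-p+1)`. -/
noncomputable def Gp (p : ℕ) : ℝ :=
  (2 * (p : ℝ) ^ 2 + (p : ℝ) - 1) /
    ((p : ℝ) ^ 4 - (p : ℝ) ^ 3 - 2 * (p : ℝ) ^ 2 - (p : ℝ) + 1)


lemma aux_abs_log_le {x : ℝ} (hx : 1/2 ≤ x) : |Real.log x| ≤ 2 * |x - 1| := by
  have hx0 : 0 < x := by linarith
  rcases le_or_gt 1 x with h1 | h1
  · rw [abs_of_nonneg (Real.log_nonneg h1), abs_of_nonneg (by linarith)]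
    have := Real.log_le_sub_one_of_pos hx0
    linarith
  · rw [abs_of_nonpos (Real.log_nonpos hx0.le h1.le), abs_of_neg (by linarith)]
    have h2 : Real.log x⁻¹ ≤ x⁻¹ - 1 := Real.log_le_sub_one_of_pos (by positivity)
    rw [Real.log_inv] at h2
    have h3 : x⁻¹ ≤ 3 - 2 * x := by
      rw [inv_le_iff_one_le_mul₀ hx0]
      nlinarith
    linarith

lemma aux_multipliable (f : ℕ → ℝ) (C : ℝ) (h1 : ∀ n, 1/2 ≤ f n)
    (h2 : ∀ n, |f n - 1| ≤ C / ((n : ℝ) + 1) ^ 2) : Multipliable f := by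
  have hsum : Summable (fun n : ℕ => 2 * C * (1 / ((n : ℝ) + 1) ^ 2)) := by
    apply Summable.mul_left
    have := (summable_nat_add_iff (f := fun n : ℕ => 1 / (n : ℝ) ^ 2) 1).mpr
      (Real.summable_one_div_nat_pow.mpr one_lt_two)
    simpa using this
  have hlog : Summable (fun n : ℕ => Real.log (f n)) := by
    apply Summable.of_abs
    apply Summable.of_nonneg_of_le (fun n => abs_nonneg _) _ hsum
    intro n
    calc |Real.log (f n)| ≤ 2 * |f n - 1| := aux_abs_log_le (h1 n)
    _ ≤ 2 * C * (1 / ((n : ℝ) + 1) ^ 2) := by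
        have := h2 n; rw [mul_assoc]
        have : |f n - 1| ≤ C * (1 / ((n : ℝ) + 1) ^ 2) := by
          rw [mul_one_div]; exact h2 n
        nlinarith [abs_nonneg (f n - 1)]
  exact Real.multipliable_of_summable_log (fun n => by linarith [h1 n]) hlog

lemma odd_prime_three_le {p : ℕ} (hp : p.Prime) (h2 : p ≠ 2) : (3 : ℝ) ≤ (p : ℝ) := by
  have := hp.two_le
  have : 3 ≤ p := by omega
  exact_mod_cast this

lemma jacobi_bounds (r : ℤ) (p : ℕ) :
    -1 ≤ (jacobiSym r p : ℝ) ∧ (jacobiSym r p : ℝ) ≤ 1 := by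
  rcases jacobiSym.trichotomy r p with h | h | h <;> rw [h] <;> norm_num

lemma Pfac_bounds (r : ℤ) (h : ℕ) (hpos : 0 < h) (p : ℕ) :
    1/2 ≤ Pfac r h p ∧ |Pfac r h p - 1| ≤ ((h : ℝ) + 17) ^ 2 / ((p : ℝ) + 1) ^ 2 := by
  have hC : (16 : ℝ) ≤ ((h : ℝ) + 17) ^ 2 := by
    have : (0:ℝ) ≤ (h:ℝ) := Nat.cast_nonneg h
    nlinarith
  unfold Pfac
  by_cases hp : p.Prime ∧ p ≠ 2
  · rw [if_pos hp]
    have hq3 : (3 : ℝ) ≤ (p : ℝ) := odd_prime_three_le hp.1 hp.2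
    obtain ⟨ht1, ht2⟩ := jacobi_bounds r p
    set q := (p : ℝ) with hq
    set t := (jacobiSym r p : ℝ) with htdef
    by_cases hdvd : p ∣ h
    · rw [if_pos hdvd]
      have hph : (q + 1) ^ 2 ≤ ((h : ℝ) + 17) ^ 2 := by
        have : (p : ℝ) ≤ (h : ℝ) := by exact_mod_cast Nat.le_of_dvd hpos hdvd
        nlinarith
      have hCp : 1 ≤ ((h : ℝ) + 17) ^ 2 / (q + 1) ^ 2 := by
        rw [le_div_iff₀ (by positivity)]; linarith
      have hqt : (0:ℝ) < q - t := by linarith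
      have hA1 : 3/4 ≤ q / (q - t) := by rw [le_div_iff₀ hqt]; linarith
      have hA2 : q / (q - t) ≤ 3/2 := by rw [div_le_iff₀ hqt]; linarith
      have hB1 : 2/3 ≤ (if ¬ (p ^ 2 ∣ h) ∧ (p : ℤ) ∣ r then 1 - 1 / q else 1) ∧
          (if ¬ (p ^ 2 ∣ h) ∧ (p : ℤ) ∣ r then 1 - 1 / q else 1) ≤ 1 := by
        split
        · have h1q : 1/q ≤ 1/3 := by
            rw [div_le_div_iff₀ (by linarith) (by norm_num)]; linarith
          have h1q' : (0:ℝ) < 1/q := by positivity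
          exact ⟨by linarith, by linarith⟩
        · norm_num
      obtain ⟨hB1a, hB1b⟩ := hB1
      constructor
      · nlinarith
      · rw [abs_le]
        constructor <;> nlinarith
    · rw [if_neg hdvd]
      have hD : (0:ℝ) < q * (q - 1) * (q ^ 2 - 1) := by
        apply mul_pos (mul_pos (by linarith) (by linarith)); nlinarith
      have hN : q ^ 4 - q ^ 3 - 2*q^2 - q + 1 ≤ q * (q - 1) * (q ^ 2 - 1) := by nlinarith
      constructor
      · rw [le_div_iff₀ hD]
        nlinarith [sq_nonneg (q-3), sq_nonneg q, mul_nonneg (mul_nonneg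
          (by linarith : (0:ℝ) ≤ q - 3) (by linarith : (0:ℝ) ≤ q)) (by linarith : (0:ℝ) ≤ q)]
      · have hle1 : (q ^ 4 - q ^ 3 - 2*q^2 - q + 1) / (q * (q - 1) * (q ^ 2 - 1)) ≤ 1 :=
          (div_le_one hD).mpr hN
        rw [abs_of_nonpos (by linarith)]
        have key : (1 : ℝ) - (q ^ 4 - q ^ 3 - 2*q^2 - q + 1) / (q * (q - 1) * (q ^ 2 - 1))
            ≤ 16 / (q+1)^2 := by
          rw [sub_div' (ne_of_gt hD), div_le_div_iff₀ hD (by positivity)]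
          nlinarith [sq_nonneg (q - 3), sq_nonneg q]
        have h16 : (16:ℝ) / (q+1)^2 ≤ ((h : ℝ) + 17) ^ 2 / (q+1)^2 := by gcongr
        linarith
  · rw [if_neg hp]; norm_num; positivity

lemma Gfac_bounds (h : ℕ) (p : ℕ) :
    1/2 ≤ (if p.Prime ∧ p ≠ 2 ∧ ¬ p ∣ h then 1 + Gp p / p else 1) ∧
    |(if p.Prime ∧ p ≠ 2 ∧ ¬ p ∣ h then 1 + Gp p / p else 1) - 1| ≤
      ((h : ℝ) + 17) ^ 2 / ((p : ℝ) + 1) ^ 2 := by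
  have hC : (16 : ℝ) ≤ ((h : ℝ) + 17) ^ 2 := by
    have : (0:ℝ) ≤ (h:ℝ) := Nat.cast_nonneg h
    nlinarith
  split
  · rename_i hp
    have hq3 : (3 : ℝ) ≤ (p : ℝ) := odd_prime_three_le hp.1 hp.2.1
    set q := (p : ℝ) with hq
    have hN : (0:ℝ) < q ^ 4 - q ^ 3 - 2*q^2 - q + 1 := by
      nlinarith [sq_nonneg (q-3), mul_nonneg (mul_nonneg
        (by linarith : (0:ℝ) ≤ q - 3) (by linarith : (0:ℝ) ≤ q)) (by linarith : (0:ℝ) ≤ q)]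
    have hM : (0:ℝ) ≤ 2 * q ^ 2 + q - 1 := by nlinarith
    have hGpos : (0:ℝ) ≤ Gp p / q := by
      apply div_nonneg (div_nonneg hM hN.le) (by linarith)
    constructor
    · linarith
    · rw [add_sub_cancel_left, abs_of_nonneg hGpos]
      have key : Gp p / q ≤ 16 / (q+1)^2 := by
        unfold Gp
        rw [div_div, div_le_div_iff₀ (by positivity) (by positivity)]
        nlinarith [sq_nonneg (q - 3), sq_nonneg q, mul_nonneg (mul_nonneg (mul_nonneg
          (by linarith : (0:ℝ) ≤ q - 3) (by linarith : (0:ℝ) ≤ q)) (by linarith : (0:ℝ) ≤ q))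
          (by linarith : (0:ℝ) ≤ q)]
      have h16 : (16:ℝ) / (q+1)^2 ≤ ((h : ℝ) + 17) ^ 2 / (q+1)^2 := by gcongr
      linarith
  · norm_num; positivity

lemma locC_bounds (r : ℤ) (h : ℕ) (hpos : 0 < h) (p : ℕ) :
    1/2 ≤ locC r h p ∧ |locC r h p - 1| ≤ ((h : ℝ) + 17) ^ 2 / ((p : ℝ) + 1) ^ 2 := by
  have hC : (16 : ℝ) ≤ ((h : ℝ) + 17) ^ 2 := by
    have : (0:ℝ) ≤ (h:ℝ) := Nat.cast_nonneg h
    nlinarith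
  unfold locC
  by_cases hp : p.Prime ∧ p ≠ 2
  · rw [if_pos hp]
    have hq3 : (3 : ℝ) ≤ (p : ℝ) := odd_prime_three_le hp.1 hp.2
    obtain ⟨ht1, ht2⟩ := jacobi_bounds r p
    set q := (p : ℝ) with hq
    set t := (jacobiSym r p : ℝ) with htdef
    by_cases hdvd : p ∣ h
    · rw [if_pos hdvd]
      have hph : (q + 1) ^ 2 ≤ ((h : ℝ) + 17) ^ 2 := by
        have : (p : ℝ) ≤ (h : ℝ) := by exact_mod_cast Nat.le_of_dvd hpos hdvd
        nlinarith
      have hCp : 1 ≤ ((h : ℝ) + 17) ^ 2 / (q + 1) ^ 2 := by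
        rw [le_div_iff₀ (by positivity)]; linarith
      have main : ∀ x : ℝ, 1/2 ≤ x → x ≤ 3/2 → 1/2 ≤ x ∧ |x - 1| ≤ ((h : ℝ) + 17) ^ 2 / (q + 1) ^ 2 := by
        intro x hx1 hx2
        refine ⟨hx1, ?_⟩
        rw [abs_le]; constructor <;> linarith
      split
      · split
        · apply main
          · rw [le_div_iff₀ (by linarith)]; linarith
          · rw [div_le_iff₀ (by linarith)]; linarith
        · exact main 1 (by norm_num) (by norm_num)
      · have hden : (0:ℝ) < (q - 1) * (q - t) := by
          apply mul_pos <;> linarith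
        apply main
        · rw [le_div_iff₀ hden]; nlinarith
        · rw [div_le_iff₀ hden]; nlinarith
    · rw [if_neg hdvd]
      have hD : (0:ℝ) < q ^ 2 * (q ^ 2 - 1) := by
        apply mul_pos (by positivity); nlinarith
      have hN : q ^ 4 - 2*q^2 - q + 1 ≤ q ^ 2 * (q ^ 2 - 1) := by nlinarith
      constructor
      · rw [le_div_iff₀ hD]; nlinarith [sq_nonneg (q-3), mul_nonneg (mul_nonneg
          (by linarith : (0:ℝ) ≤ q - 3) (by linarith : (0:ℝ) ≤ q)) (by linarith : (0:ℝ) ≤ q)]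
      · have hle1 : (q ^ 4 - 2*q^2 - q + 1) / (q ^ 2 * (q ^ 2 - 1)) ≤ 1 :=
          (div_le_one hD).mpr hN
        rw [abs_of_nonpos (by linarith)]
        have key : (1 : ℝ) - (q ^ 4 - 2*q^2 - q + 1) / (q ^ 2 * (q ^ 2 - 1)) ≤ 16 / (q+1)^2 := by
          rw [sub_div' (ne_of_gt hD), div_le_div_iff₀ hD (by positivity)]
          nlinarith [sq_nonneg (q - 3), sq_nonneg q]
        have h16 : (16:ℝ) / (q+1)^2 ≤ ((h : ℝ) + 17) ^ 2 / (q+1)^2 := by gcongr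
        linarith
  · rw [if_neg hp]; norm_num; positivity

lemma jacobi_eq_zero_of_dvd {r : ℤ} {p : ℕ} (hp : p.Prime) (hr : (p : ℤ) ∣ r) :
    (jacobiSym r p : ℝ) = 0 := by
  haveI := Fact.mk hp
  have : jacobiSym r p = 0 := by
    rw [← jacobiSym.legendreSym.to_jacobiSym, legendreSym.eq_zero_iff,
      ZMod.intCast_zmod_eq_zero_iff_dvd]
    exact hr
  rw [this]
  norm_num

lemma key_identity (r : ℤ) (h : ℕ) (hpos : 0 < h) (p : ℕ) :
    (Pfac r h p * (if p.Prime ∧ p ≠ 2 ∧ ¬ p ∣ h then 1 + Gp p / p else 1)) *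
      (if p ∈ h.primeFactors.filter (fun q => Odd q) then
        1 - (1 + (jacobiSym r p : ℝ)) / p else 1)
    = locC r h p *
      (if p ∈ h.primeFactors.filter (fun q => Odd q) then ((p : ℝ) - 1) / p else 1) := by
  by_cases hp : p.Prime ∧ p ≠ 2
  · have hq3 : (3 : ℝ) ≤ (p : ℝ) := by
      have := hp.1.two_le
      have : 3 ≤ p := by omega
      exact_mod_cast this
    obtain ⟨ht1, ht2⟩ : -1 ≤ (jacobiSym r p : ℝ) ∧ (jacobiSym r p : ℝ) ≤ 1 := by
      rcases jacobiSym.trichotomy r p with h | h | h <;> rw [h] <;> norm_num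
    by_cases hdvd : p ∣ h
    · have hmem : p ∈ h.primeFactors.filter (fun q => Odd q) := by
        rw [Finset.mem_filter, Nat.mem_primeFactors]
        exact ⟨⟨hp.1, hdvd, hpos.ne'⟩, hp.1.odd_of_ne_two hp.2⟩
      rw [if_pos hmem, if_pos hmem, if_neg (by tauto)]
      unfold Pfac locC
      rw [if_pos hp, if_pos hp, if_pos hdvd, if_pos hdvd]
      by_cases hr : (p : ℤ) ∣ r
      · have ht0 : (jacobiSym r p : ℝ) = 0 := jacobi_eq_zero_of_dvd hp.1 hr
        rw [if_pos hr, ht0]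
        by_cases hsq : p ^ 2 ∣ h
        · rw [if_neg (by tauto), if_neg (by tauto)]
          have hq0 : (p : ℝ) ≠ 0 := by linarith
          field_simp
          ring
        · rw [if_pos (by tauto), if_pos (by tauto)]
          have hq0 : (p : ℝ) ≠ 0 := by linarith
          field_simp
          try ring
      · rw [if_neg hr, if_neg (by tauto)]
        have hq0 : (p : ℝ) ≠ 0 := by linarith
        have h1 : (p : ℝ) - 1 ≠ 0 := by linarith
        have h2 : (p : ℝ) - (jacobiSym r p : ℝ) ≠ 0 := by linarith
        field_simp
        ring
    · have hmem : p ∉ h.primeFactors.filter (fun q => Odd q) := by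
        rw [Finset.mem_filter, Nat.mem_primeFactors]
        tauto
      rw [if_neg hmem, if_neg hmem, if_pos ⟨hp.1, hp.2, hdvd⟩]
      unfold Pfac locC Gp
      rw [if_pos hp, if_pos hp, if_neg hdvd, if_neg hdvd]
      set q := (p : ℝ) with hqdef
      have hq0 : q ≠ 0 := by linarith
      have h1 : q - 1 ≠ 0 := by linarith
      have h2 : q ^ 2 - 1 ≠ 0 := by nlinarith
      have hN : (0:ℝ) < q ^ 4 - q ^ 3 - 2*q^2 - q + 1 := by
        nlinarith [mul_nonneg (mul_nonneg
          (by linarith : (0:ℝ) ≤ q - 3) (by linarith : (0:ℝ) ≤ q)) (by linarith : (0:ℝ) ≤ q)]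
      have hN' : q ^ 4 - q ^ 3 - 2*q^2 - q + 1 ≠ 0 := ne_of_gt hN
      generalize hM : q ^ 4 - q ^ 3 - 2 * q ^ 2 - q + 1 = N at hN' ⊢
      field_simp
      rw [← hM]
      ring
  · have hmem : p ∉ h.primeFactors.filter (fun q => Odd q) := by
      rw [Finset.mem_filter, Nat.mem_primeFactors]
      intro hc
      rcases hc with ⟨⟨hpp, _, _⟩, hodd⟩
      exact hp ⟨hpp, by rintro rfl; exact (by norm_num : ¬ Odd 2) hodd⟩
    rw [if_neg hmem, if_neg hmem, if_neg (by tauto)]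
    unfold Pfac locC
    rw [if_neg hp, if_neg hp]
    ring


lemma totient_prod (h : ℕ) (hpos : 0 < h) :
    ∏ p ∈ h.primeFactors, (((p : ℝ) - 1) / p) = (Nat.totient h : ℝ) / h := by
  have h0 : (h : ℝ) ≠ 0 := Nat.cast_ne_zero.mpr hpos.ne'
  have hP : (0:ℝ) < ∏ p ∈ h.primeFactors, (p : ℝ) :=
    Finset.prod_pos fun p hp => by
      exact_mod_cast (Nat.prime_of_mem_primeFactors hp).pos
  have key := congrArg (Nat.cast : ℕ → ℝ) (Nat.totient_mul_prod_primeFactors h)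
  push_cast at key
  have hsub : ∏ p ∈ h.primeFactors, ((p - 1 : ℕ) : ℝ) =
      ∏ p ∈ h.primeFactors, ((p : ℝ) - 1) := by
    apply Finset.prod_congr rfl
    intro p hp
    have := (Nat.prime_of_mem_primeFactors hp).one_lt.le
    push_cast [Nat.cast_sub this]
    ring
  rw [hsub] at key
  rw [Finset.prod_div_distrib, div_eq_div_iff hP.ne' h0]
  linarith [key]

/-- `(1/3)·P(r,h)·∏_{p|h odd}(1-(1+(r|p))/p)·∏_{p∤h odd prime}(1+G(p)/p)
= 𝔠(r,h)`, all infinite products converging. -/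
theorem stmt14 (h : ℕ) (hpos : 0 < h) (hodd : Odd h) (r : ℤ)
    (hsf : Squarefree (Int.gcd r (h : ℤ))) :
    Multipliable (Pfac r h) ∧
    Multipliable (fun p : ℕ => if p.Prime ∧ p ≠ 2 ∧ ¬ p ∣ h then 1 + Gp p / p else 1) ∧
    Multipliable (locC r h) ∧
    (1 / 3 : ℝ) * Pconst r h *
        (∏ p ∈ h.primeFactors.filter (fun p => Odd p),
          (1 - (1 + (jacobiSym r p : ℝ)) / (p : ℝ))) *
        (∏' p : ℕ, (if p.Prime ∧ p ≠ 2 ∧ ¬ p ∣ h then 1 + Gp p / p else 1)) =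
      frakC r h := by
  have mP : Multipliable (Pfac r h) :=
    aux_multipliable _ _ (fun n => (Pfac_bounds r h hpos n).1)
      (fun n => (Pfac_bounds r h hpos n).2)
  have mG : Multipliable (fun p : ℕ => if p.Prime ∧ p ≠ 2 ∧ ¬ p ∣ h then 1 + Gp p / p else 1) :=
    aux_multipliable _ _ (fun n => (Gfac_bounds h n).1) (fun n => (Gfac_bounds h n).2)
  have mL : Multipliable (locC r h) :=
    aux_multipliable _ _ (fun n => (locC_bounds r h hpos n).1)
      (fun n => (locC_bounds r h hpos n).2)
  refine ⟨mP, mG, mL, ?_⟩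
  set S := h.primeFactors.filter (fun p => Odd p) with hSdef
  have hS : S = h.primeFactors := by
    rw [hSdef]
    apply Finset.filter_true_of_mem
    intro p hp
    rcases (Nat.prime_of_mem_primeFactors hp).eq_two_or_odd' with rfl | hodd'
    · exact absurd (hodd.of_dvd_nat (Nat.dvd_of_mem_primeFactors hp)) (by norm_num)
    · exact hodd'
  set E : ℕ → ℝ := fun p => if p ∈ S then 1 - (1 + (jacobiSym r p : ℝ)) / p else 1 with hE
  set D : ℕ → ℝ := fun p => if p ∈ S then ((p : ℝ) - 1) / p else 1 with hD
  have mE : Multipliable E :=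
    multipliable_of_finite_mulSupport (S.finite_toSet.subset
      (fun x hx => by by_contra hc; exact hx (if_neg hc)))
  have mD : Multipliable D :=
    multipliable_of_finite_mulSupport (S.finite_toSet.subset
      (fun x hx => by by_contra hc; exact hx (if_neg hc)))
  have hprod : ∏' p, ((Pfac r h p *
      (if p.Prime ∧ p ≠ 2 ∧ ¬ p ∣ h then 1 + Gp p / p else 1)) * E p)
      = ∏' p, (locC r h p * D p) :=
    tprod_congr (fun p => key_identity r h hpos p)
  rw [(mP.mul mG).tprod_mul mE, mP.tprod_mul mG, mL.tprod_mul mD] at hprod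
  have hEeq : ∏' p, E p = ∏ p ∈ S, (1 - (1 + (jacobiSym r p : ℝ)) / p) := by
    rw [tprod_eq_prod (fun b hb => if_neg hb)]
    exact Finset.prod_congr rfl (fun p hp => if_pos hp)
  have hDeq : ∏' p, D p = (Nat.totient h : ℝ) / h := by
    rw [tprod_eq_prod (fun b hb => if_neg hb),
      Finset.prod_congr rfl (fun p (hp : p ∈ S) => if_pos hp), hS]
    exact totient_prod h hpos
  rw [hEeq, hDeq] at hprod
  have hphi : (0:ℝ) < (Nat.totient h : ℝ) := by
    exact_mod_cast (Nat.totient_pos).mpr hpos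
  have hh0 : (h : ℝ) ≠ 0 := Nat.cast_ne_zero.mpr hpos.ne'
  unfold Pconst frakC
  set A := ∏' p, Pfac r h p
  set B := ∏' p : ℕ, (if p.Prime ∧ p ≠ 2 ∧ ¬ p ∣ h then 1 + Gp p / p else 1)
  set L := ∏' p, locC r h p
  set Ep := ∏ p ∈ S, (1 - (1 + (jacobiSym r p : ℝ)) / p)
  calc (1/3 : ℝ) * (1 / (Nat.totient h : ℝ) * A) * Ep * B
      = 1 / (3 * (Nat.totient h : ℝ)) * (A * B * Ep) := by ring
    _ = 1 / (3 * (Nat.totient h : ℝ)) * (L * ((Nat.totient h : ℝ) / h)) := by rw [hprod]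
    _ = 1 / (3 * (h : ℝ)) * L := by field_simp
end
end

section
/- Let ℓ be an odd prime. Then #{ g ∈ GL₂(ℤ/ℓ²ℤ) : tr(g)² − 4·det(g) ≢ 0 (mod ℓ²) } = ((ℓ⁴−2ℓ²−ℓ+1)/(ℓ²(ℓ²−1))) · #GL₂(ℤ/ℓ²ℤ); equivalently, this cardinality equals ℓ³(ℓ−1)(ℓ⁴−2ℓ²−ℓ+1). -/
/-- The discriminant `tr(g)² - 4 det(g)` of a matrix in `GL₂(ℤ/mℤ)`. -/
def glDisc (m : ℕ) (g : Matrix.GeneralLinearGroup (Fin 2) (ZMod m)) : ZMod m :=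
  (Matrix.trace (g : Matrix (Fin 2) (Fin 2) (ZMod m))) ^ 2 -
    4 * Matrix.det (g : Matrix (Fin 2) (Fin 2) (ZMod m))
open Finset

section general
variable {α β : Type*} [Fintype α] [Fintype β] [DecidableEq β]

theorem fiber_count {k : ℕ} {f : α → β}
    (hf : ∀ y, (univ.filter fun x => f x = y).card = k)
    (P : β → Prop) [DecidablePred P] :
    (univ.filter fun x => P (f x)).card = k * (univ.filter P).card := by
  classical
  rw [Finset.card_eq_sum_card_fiberwise (f := f) (t := univ.filter P)
    (fun x hx => by simpa using (mem_filter.mp hx).2)]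
  rw [Finset.sum_congr rfl (fun y hy => ?_), sum_const, smul_eq_mul, mul_comm]
  rw [filter_filter, ← hf y]
  congr 1
  ext x
  simp only [mem_filter, mem_univ, true_and]
  exact ⟨fun h => h.2, fun h => ⟨by rw [h]; exact (mem_filter.mp hy).2, h⟩⟩

theorem fiber_prodMap {k m : ℕ} {α' β' : Type*} [Fintype α'] [Fintype β'] [DecidableEq β']
    {f : α → β} {g : α' → β'}
    (hf : ∀ y, (univ.filter fun x => f x = y).card = k)
    (hg : ∀ y, (univ.filter fun x => g x = y).card = m) :
    ∀ y : β × β', (univ.filter fun x : α × α' => (f x.1, g x.2) = y).card = k * m := by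
  rintro ⟨y1, y2⟩
  rw [← Finset.univ_product_univ]
  simp only [Prod.mk.injEq]
  rw [show (filter (fun x : α × α' => f x.1 = y1 ∧ g x.2 = y2) (univ ×ˢ univ)) =
      (univ.filter fun x => f x = y1) ×ˢ (univ.filter fun x => g x = y2) by
    ext x; simp [mem_filter]]
  rw [card_product, hf, hg]

theorem card_prod_sum {α' : Type*} [Fintype α'] [DecidableEq α] (P : α × α' → Prop)
    [DecidablePred P] :
    (univ.filter P).card = ∑ a : α, (univ.filter fun b => P (a, b)).card := by
  classical
  rw [Finset.card_eq_sum_card_fiberwise (f := Prod.fst) (t := univ) (fun _ _ => mem_univ _)]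
  refine sum_congr rfl fun a _ => ?_
  rw [filter_filter]
  apply Finset.card_nbij (fun p => p.2)
  · intro p hp
    simp only [Finset.mem_coe, mem_filter, mem_univ, true_and] at hp ⊢
    rcases hp with ⟨h1, h2⟩
    subst h2
    simpa using h1
  · intro p hp q hq h
    simp only [coe_filter, Set.mem_setOf_eq] at hp hq
    simp only at h
    exact Prod.ext (hp.2.2.trans hq.2.2.symm) h
  · intro b hb
    simp only [coe_filter, Set.mem_setOf_eq, Set.mem_image] at hb ⊢
    exact ⟨(a, b), ⟨mem_univ _, hb.2, rfl⟩, rfl⟩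

theorem card_mul_eq_unit {M : Type*} [CommMonoid M] [Fintype M] [DecidableEq M] {t : M}
    (ht : IsUnit t) :
    (univ.filter fun p : M × M => p.1 * p.2 = t).card =
      (univ.filter fun x : M => IsUnit x).card := by
  classical
  apply Finset.card_nbij (fun p => p.1)
  · intro p hp
    simp only [Finset.mem_coe, mem_filter, mem_univ, true_and] at hp ⊢
    exact isUnit_of_mul_isUnit_left (hp ▸ ht)
  · intro p hp q hq h
    simp only [coe_filter, Set.mem_setOf_eq] at hp hq
    simp only at h
    have hu : IsUnit p.1 := isUnit_of_mul_isUnit_left (hp.2 ▸ ht)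
    refine Prod.ext h (hu.mul_left_cancel ?_)
    rw [hp.2, h, hq.2]
  · intro b hb
    simp only [coe_filter, Set.mem_setOf_eq, Set.mem_image] at hb ⊢
    obtain ⟨u, rfl⟩ := hb.2
    exact ⟨(↑u, ↑u⁻¹ * t), ⟨mem_univ _, by rw [← mul_assoc, u.mul_inv, one_mul]⟩, rfl⟩

end general


section zmodlayer
variable (ℓ : ℕ) [hF : Fact ℓ.Prime]

/-- Reduction map `ZMod ℓ² → ZMod ℓ`. -/
def phi : ZMod (ℓ^2) →+* ZMod ℓ := ZMod.castHom (dvd_pow_self ℓ two_ne_zero) (ZMod ℓ)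

theorem phi_surj : Function.Surjective (phi ℓ) := fun y =>
  ⟨((y.val : ℕ) : ZMod (ℓ^2)), by rw [map_natCast, ZMod.natCast_zmod_val]⟩

theorem phi_eq_zero_iff (x : ZMod (ℓ^2)) : phi ℓ x = 0 ↔ ℓ ∣ x.val := by
  rw [phi, ZMod.castHom_apply, ← ZMod.natCast_val, ZMod.natCast_eq_zero_iff]

theorem phi_fiber (y : ZMod ℓ) :
    (univ.filter fun x : ZMod (ℓ^2) => phi ℓ x = y).card = ℓ := by
  have hconst : ∀ z : ZMod ℓ, (univ.filter fun x : ZMod (ℓ^2) => phi ℓ x = z).card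
      = (univ.filter fun x : ZMod (ℓ^2) => phi ℓ x = 0).card := by
    intro z
    obtain ⟨x₀, hx₀⟩ := phi_surj ℓ z
    apply Finset.card_nbij' (fun x => x - x₀) (fun x => x + x₀)
    · intro x hx; simp only [Finset.mem_coe, mem_filter, mem_univ, true_and] at hx ⊢
      rw [map_sub, hx, hx₀, sub_self]
    · intro x hx; simp only [Finset.mem_coe, mem_filter, mem_univ, true_and] at hx ⊢
      rw [map_add, hx, hx₀, zero_add]
    · intro x _; simp
    · intro x _; simp
  have htot : ℓ^2 = ∑ z : ZMod ℓ, (univ.filter fun x : ZMod (ℓ^2) => phi ℓ x = z).card := by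
    have h := Finset.card_eq_sum_card_fiberwise (f := phi ℓ)
      (s := (univ : Finset (ZMod (ℓ^2)))) (t := univ) (fun _ _ => mem_univ _)
    rwa [card_univ, ZMod.card] at h
  rw [Finset.sum_congr rfl (fun z _ => hconst z), sum_const, card_univ, ZMod.card,
    smul_eq_mul] at htot
  have hc : (univ.filter fun x : ZMod (ℓ^2) => phi ℓ x = 0).card = ℓ :=
    (Nat.eq_of_mul_eq_mul_left hF.out.pos (by rw [← htot]; ring)).symm
  rw [hconst y, hc]

theorem isUnit_iff (x : ZMod (ℓ^2)) : IsUnit x ↔ phi ℓ x ≠ 0 := by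
  rw [ne_eq, phi_eq_zero_iff]
  rw [show x = ((x.val : ℕ) : ZMod (ℓ^2)) from (ZMod.natCast_zmod_val x).symm]
  rw [ZMod.isUnit_iff_coprime, ZMod.val_natCast_of_lt (ZMod.val_lt x),
    Nat.coprime_pow_right_iff zero_lt_two, Nat.coprime_comm]
  exact hF.out.coprime_iff_not_dvd

theorem nonunit_sq {x : ZMod (ℓ^2)} (hx : ¬ IsUnit x) : x * x = 0 := by
  rw [isUnit_iff, not_not, phi_eq_zero_iff] at hx
  obtain ⟨m, hm⟩ := hx
  have hx' : x = ((ℓ * m : ℕ) : ZMod (ℓ^2)) := by rw [← hm, ZMod.natCast_zmod_val]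
  rw [hx', ← Nat.cast_mul, show (ℓ*m)*(ℓ*m) = ℓ^2 * (m*m) by ring,
    Nat.cast_mul, ZMod.natCast_self, zero_mul]

theorem ell_mul_eq_zero (x : ZMod (ℓ^2)) :
    (ℓ : ZMod (ℓ^2)) * x = 0 ↔ phi ℓ x = 0 := by
  rw [phi_eq_zero_iff]
  rw [show x = ((x.val : ℕ) : ZMod (ℓ^2)) from (ZMod.natCast_zmod_val x).symm]
  rw [ZMod.val_natCast_of_lt (ZMod.val_lt x), ← Nat.cast_mul,
    ZMod.natCast_eq_zero_iff]
  constructor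
  · intro h
    refine (Nat.mul_dvd_mul_iff_left hF.out.pos).mp ?_
    rwa [← pow_two]
  · intro h
    have h2 : ℓ * ℓ ∣ ℓ * x.val := mul_dvd_mul_left ℓ h
    rwa [← pow_two] at h2

theorem exists_unit_rep {x : ZMod (ℓ^2)} (hx0 : x ≠ 0) (hxu : ¬ IsUnit x) :
    ∃ t : ZMod (ℓ^2), IsUnit t ∧ x = (ℓ : ZMod (ℓ^2)) * t := by
  have hd : ℓ ∣ x.val := by
    rw [isUnit_iff, not_not, phi_eq_zero_iff] at hxu; exact hxu
  obtain ⟨m, hm⟩ := hd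
  refine ⟨(m : ℕ), ?_, ?_⟩
  · rw [ZMod.isUnit_iff_coprime, Nat.coprime_pow_right_iff zero_lt_two, Nat.coprime_comm]
    apply hF.out.coprime_iff_not_dvd.mpr
    intro hdvd
    have hmpos : 0 < m := by
      rcases Nat.eq_zero_or_pos m with h | h
      · exfalso; apply hx0
        have : x.val = 0 := by rw [hm, h, mul_zero]
        rwa [← ZMod.val_eq_zero]
      · exact h
    have hmlt : m < ℓ := by
      by_contra hge
      push_neg at hge
      have : ℓ^2 ≤ x.val := by rw [hm, pow_two]; exact Nat.mul_le_mul_left ℓ hge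
      exact absurd (ZMod.val_lt x) (not_lt.mpr this)
    exact Nat.not_dvd_of_pos_of_lt hmpos hmlt hdvd
  · rw [← Nat.cast_mul, ← hm, ZMod.natCast_zmod_val]

theorem annihilator {x : ZMod (ℓ^2)} (hx0 : x ≠ 0) (hxu : ¬ IsUnit x) (w : ZMod (ℓ^2)) :
    x * w = 0 ↔ phi ℓ w = 0 := by
  obtain ⟨t, ht, rfl⟩ := exists_unit_rep ℓ hx0 hxu
  rw [mul_assoc, ell_mul_eq_zero, map_mul]
  exact (ht.map (phi ℓ)).mul_right_eq_zero

theorem card_isUnit :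
    (univ.filter fun x : ZMod (ℓ^2) => IsUnit x).card = ℓ * (ℓ - 1) := by
  rw [show (univ.filter fun x : ZMod (ℓ^2) => IsUnit x)
      = (univ.filter fun x => phi ℓ x ≠ 0) from
    Finset.filter_congr fun x _ => by simp [isUnit_iff ℓ x]]
  rw [fiber_count (phi_fiber ℓ) (fun y => y ≠ 0)]
  congr 1
  rw [Finset.filter_ne', Finset.card_erase_of_mem (mem_univ _), card_univ, ZMod.card]

theorem card_nonunit :
    (univ.filter fun x : ZMod (ℓ^2) => ¬ IsUnit x).card = ℓ := by
  rw [show (univ.filter fun x : ZMod (ℓ^2) => ¬ IsUnit x)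
      = (univ.filter fun x => phi ℓ x = 0) from
    Finset.filter_congr fun x _ => by rw [isUnit_iff, not_not]]
  rw [fiber_count (phi_fiber ℓ) (fun y => y = 0)]
  rw [Finset.filter_eq', if_pos (mem_univ _), card_singleton, mul_one]

end zmodlayer
section count2
variable (ℓ : ℕ) [hF : Fact ℓ.Prime]

theorem nontriv : (1:ℕ) < ℓ^2 := Nat.one_lt_pow two_ne_zero hF.out.one_lt

theorem card_mul_zero :
    (univ.filter fun p : ZMod (ℓ^2) × ZMod (ℓ^2) => p.1 * p.2 = 0).card
      = ℓ * (ℓ-1) + (ℓ^2 + (ℓ - 1) * ℓ) := by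
  haveI : Fact (1 < ℓ^2) := ⟨nontriv ℓ⟩
  rw [card_prod_sum]
  rw [← Finset.sum_filter_add_sum_filter_not univ (fun b : ZMod (ℓ^2) => IsUnit b)]
  congr 1
  · -- units part
    rw [Finset.sum_congr rfl (fun b hb => ?_), sum_const, smul_eq_mul, card_isUnit ℓ, mul_one]
    have hb' : IsUnit b := (mem_filter.mp hb).2
    rw [show (univ.filter fun w : ZMod (ℓ^2) => (b, w).1 * (b, w).2 = 0)
        = {0} from ?_, card_singleton]
    ext w
    simp only [mem_filter, mem_univ, true_and, mem_singleton]
    exact hb'.mul_right_eq_zero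
  · -- nonunits part
    rw [← Finset.sum_filter_add_sum_filter_not (univ.filter fun b : ZMod (ℓ^2) => ¬ IsUnit b)
      (fun b => b = 0)]
    congr 1
    · -- b = 0
      rw [show ((univ.filter fun b : ZMod (ℓ^2) => ¬ IsUnit b).filter fun b => b = 0)
          = {0} from ?_]
      · rw [sum_singleton]
        have : (univ.filter fun w : ZMod (ℓ^2) => ((0:ZMod (ℓ^2)), w).1 * ((0:ZMod (ℓ^2)), w).2 = 0)
            = univ := by
          ext w; simp
        rw [this, card_univ, ZMod.card]
      · ext b
        simp only [mem_filter, mem_univ, true_and, mem_singleton]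
        constructor
        · exact fun h => h.2
        · rintro rfl; exact ⟨not_isUnit_zero, rfl⟩

    · -- b nonunit nonzero
      have hcard : ((univ.filter fun b : ZMod (ℓ^2) => ¬ IsUnit b).filter fun b => ¬ b = 0).card
          = ℓ - 1 := by
        have h1 := Finset.card_filter_add_card_filter_not
          (s := univ.filter fun b : ZMod (ℓ^2) => ¬ IsUnit b) (p := fun b => b = 0)
        have h2 : ((univ.filter fun b : ZMod (ℓ^2) => ¬ IsUnit b).filter fun b => b = 0).card
            = 1 := by
          rw [show ((univ.filter fun b : ZMod (ℓ^2) => ¬ IsUnit b).filter fun b => b = 0)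
              = {0} from ?_, card_singleton]
          ext b
          simp only [mem_filter, mem_univ, true_and, mem_singleton]
          constructor
          · exact fun h => h.2
          · rintro rfl; exact ⟨not_isUnit_zero, rfl⟩
        rw [card_nonunit ℓ] at h1
        omega
      rw [Finset.sum_congr rfl (fun b hb => ?_), sum_const, smul_eq_mul, hcard]
      simp only [mem_filter, mem_univ, true_and] at hb
      have h3 : (univ.filter fun w : ZMod (ℓ^2) => (b, w).1 * (b, w).2 = 0)
          = (univ.filter fun w : ZMod (ℓ^2) => phi ℓ w = 0) :=
        Finset.filter_congr fun w _ => by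
          simpa using annihilator ℓ hb.2 hb.1 w
      rw [h3, phi_fiber ℓ 0]

theorem card_M :
    (univ.filter fun v : ZMod (ℓ^2) × ZMod (ℓ^2) × ZMod (ℓ^2) =>
        v.2.1 * v.2.2 = v.1 * v.1).card
      = (ℓ*(ℓ-1)) * (ℓ*(ℓ-1)) + ℓ * (ℓ * (ℓ-1) + (ℓ^2 + (ℓ - 1) * ℓ)) := by
  haveI : Fact (1 < ℓ^2) := ⟨nontriv ℓ⟩
  rw [card_prod_sum]
  rw [← Finset.sum_filter_add_sum_filter_not univ (fun u : ZMod (ℓ^2) => IsUnit u)]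
  congr 1
  · rw [Finset.sum_congr rfl (fun u hu => ?_), sum_const, smul_eq_mul, card_isUnit ℓ]
    have hu' : IsUnit u := (mem_filter.mp hu).2
    have := card_mul_eq_unit (M := ZMod (ℓ^2)) (hu'.mul hu')
    rw [show (univ.filter fun b : ZMod (ℓ^2) × ZMod (ℓ^2) =>
        (u, b).2.1 * (u, b).2.2 = (u, b).1 * (u, b).1)
      = (univ.filter fun p : ZMod (ℓ^2) × ZMod (ℓ^2) => p.1 * p.2 = u * u) from rfl]
    rw [this, card_isUnit ℓ]
  · rw [Finset.sum_congr rfl (fun u hu => ?_), sum_const, smul_eq_mul, card_nonunit ℓ]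
    simp only [mem_filter, mem_univ, true_and] at hu
    have h0 : u * u = 0 := nonunit_sq ℓ hu
    rw [show (univ.filter fun b : ZMod (ℓ^2) × ZMod (ℓ^2) =>
        (u, b).2.1 * (u, b).2.2 = (u, b).1 * (u, b).1)
      = (univ.filter fun p : ZMod (ℓ^2) × ZMod (ℓ^2) => p.1 * p.2 = u * u) from rfl]
    rw [show (univ.filter fun p : ZMod (ℓ^2) × ZMod (ℓ^2) => p.1 * p.2 = u * u)
        = (univ.filter fun p : ZMod (ℓ^2) × ZMod (ℓ^2) => p.1 * p.2 = 0) from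
      Finset.filter_congr fun p _ => by rw [h0]]
    exact card_mul_zero ℓ

end count2
section matrixlayer

variable {S : Type*} [CommRing S] [Fintype S] [DecidableEq S]

/-- The 2×2 matrix built from a quadruple. -/
def matOf (q : S × S × S × S) : Matrix (Fin 2) (Fin 2) S :=
  !![q.1, q.2.1; q.2.2.1, q.2.2.2]

def matEquiv : Matrix (Fin 2) (Fin 2) S ≃ S × S × S × S where
  toFun A := (A 0 0, A 0 1, A 1 0, A 1 1)
  invFun := matOf
  left_inv A := by
    ext i j
    fin_cases i <;> fin_cases j <;> simp [matOf]
  right_inv q := rfl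

theorem det_matOf (q : S × S × S × S) :
    (matOf q).det = q.1 * q.2.2.2 - q.2.1 * q.2.2.1 := by
  rw [matOf, Matrix.det_fin_two_of]

theorem trace_matOf (q : S × S × S × S) :
    (matOf q).trace = q.1 + q.2.2.2 := by
  rw [matOf, Matrix.trace_fin_two_of]

noncomputable def glEquiv (P : Matrix (Fin 2) (Fin 2) S → Prop) :
    {g : Matrix.GeneralLinearGroup (Fin 2) S // P (g : Matrix (Fin 2) (Fin 2) S)} ≃
      {A : Matrix (Fin 2) (Fin 2) S // IsUnit A ∧ P A} where
  toFun g := ⟨↑g.1, g.1.isUnit, g.2⟩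
  invFun A := ⟨A.2.1.unit, by rw [A.2.1.unit_spec]; exact A.2.2⟩
  left_inv g := Subtype.ext (Units.ext (IsUnit.unit_spec _))
  right_inv A := Subtype.ext (A.2.1.unit_spec)

theorem natCard_GL (P : Matrix (Fin 2) (Fin 2) S → Prop) [DecidablePred P]
    [∀ x : S, Decidable (IsUnit x)] :
    Nat.card {g : Matrix.GeneralLinearGroup (Fin 2) S // P (g : Matrix (Fin 2) (Fin 2) S)}
      = (Finset.univ.filter fun q : S × S × S × S =>
          IsUnit (q.1 * q.2.2.2 - q.2.1 * q.2.2.1) ∧ P (matOf q)).card := by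
  classical
  rw [Nat.card_congr (glEquiv P)]
  rw [Nat.card_congr ((matEquiv (S := S)).subtypeEquiv (fun A => ?_) :
    {A : Matrix (Fin 2) (Fin 2) S // IsUnit A ∧ P A} ≃
    {q : S × S × S × S // IsUnit (q.1 * q.2.2.2 - q.2.1 * q.2.2.1) ∧ P (matOf q)})]
  · rw [Nat.card_eq_fintype_card, Fintype.card_subtype]
  · have hA : matOf (matEquiv A) = A := matEquiv.left_inv A
    rw [← det_matOf (matEquiv A), hA, ← Matrix.isUnit_iff_isUnit_det]

end matrixlayer
section dets
variable {S : Type*} [CommRing S]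

def dq (q : S × S × S × S) : S := q.1 * q.2.2.2 - q.2.1 * q.2.2.1

def discq (q : S × S × S × S) : S := (q.1 + q.2.2.2)^2 - 4 * dq q

end dets

section maincount
variable (ℓ : ℕ) [hF : Fact ℓ.Prime]

theorem two_unit (hℓ2 : ℓ ≠ 2) : IsUnit (2 : ZMod (ℓ^2)) := by
  rw [show ((2 : ZMod (ℓ^2))) = ((2:ℕ) : ZMod (ℓ^2)) by norm_cast]
  rw [isUnit_iff ℓ, ne_eq, map_natCast, ZMod.natCast_eq_zero_iff]
  intro hdvd
  exact hℓ2 ((Nat.prime_dvd_prime_iff_eq hF.out Nat.prime_two).mp hdvd)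

theorem isUnit_iff' (x : ZMod (ℓ^2)) : IsUnit x ↔ IsUnit (phi ℓ x) := by
  rw [isUnit_iff ℓ x, isUnit_iff_ne_zero]

theorem card_GL_quad :
    (Finset.univ.filter fun q :
        ZMod (ℓ^2) × ZMod (ℓ^2) × ZMod (ℓ^2) × ZMod (ℓ^2) => IsUnit (dq q)).card
      = ℓ * (ℓ * (ℓ * ℓ)) * ((ℓ^2 - 1) * (ℓ^2 - ℓ)) := by
  classical
  have hfib := fiber_prodMap (phi_fiber ℓ)
    (fiber_prodMap (phi_fiber ℓ) (fiber_prodMap (phi_fiber ℓ) (phi_fiber ℓ)))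
  have hGLF : (Finset.univ.filter fun y :
      ZMod ℓ × ZMod ℓ × ZMod ℓ × ZMod ℓ => IsUnit (dq y)).card
      = (ℓ^2 - 1) * (ℓ^2 - ℓ) := by
    have h1 := natCard_GL (S := ZMod ℓ) (fun _ => True)
    rw [Nat.card_congr (Equiv.subtypeUnivEquiv (fun _ => trivial))] at h1
    rw [Matrix.card_GL_field, Fin.prod_univ_two, ZMod.card] at h1
    simp only [Fin.val_zero, Fin.val_one, pow_zero, pow_one] at h1
    rw [h1]
    exact congrArg Finset.card (Finset.filter_congr fun q _ => by simp [dq])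
  have hcong : (Finset.univ.filter fun q :
      ZMod (ℓ^2) × ZMod (ℓ^2) × ZMod (ℓ^2) × ZMod (ℓ^2) => IsUnit (dq q))
      = (Finset.univ.filter fun q :
      ZMod (ℓ^2) × ZMod (ℓ^2) × ZMod (ℓ^2) × ZMod (ℓ^2) =>
        IsUnit (dq (phi ℓ q.1, phi ℓ q.2.1, phi ℓ q.2.2.1, phi ℓ q.2.2.2))) := by
    apply Finset.filter_congr
    intro q _
    rw [isUnit_iff' ℓ]
    have : phi ℓ (dq q) = dq (phi ℓ q.1, phi ℓ q.2.1, phi ℓ q.2.2.1, phi ℓ q.2.2.2) := by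
      simp [dq]
    rw [this]
  rw [hcong]
  have := fiber_count (P := fun y : ZMod ℓ × ZMod ℓ × ZMod ℓ × ZMod ℓ => IsUnit (dq y)) hfib
  rw [this, hGLF]

theorem card_bad (hℓ2 : ℓ ≠ 2) :
    (Finset.univ.filter fun q :
        ZMod (ℓ^2) × ZMod (ℓ^2) × ZMod (ℓ^2) × ZMod (ℓ^2) =>
          IsUnit (dq q) ∧ discq q = 0).card
      = (ℓ*(ℓ-1)) * ((ℓ*(ℓ-1)) * (ℓ*(ℓ-1)) + ℓ * (ℓ * (ℓ-1) + (ℓ^2 + (ℓ - 1) * ℓ))) := by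
  classical
  have u2 : IsUnit (2 : ZMod (ℓ^2)) := two_unit ℓ hℓ2
  set h : ZMod (ℓ^2) := ↑u2.unit⁻¹ with hdef
  have hh : (2 : ZMod (ℓ^2)) * h = 1 := by
    rw [show (2 : ZMod (ℓ^2)) = ↑u2.unit from u2.unit_spec.symm]
    exact u2.unit.mul_inv
  have hfour : IsUnit (4 : ZMod (ℓ^2)) := by
    rw [show (4 : ZMod (ℓ^2)) = 2 * 2 by norm_num]
    exact u2.mul u2
  have hu : IsUnit h := (u2.unit⁻¹).isUnit
  have hbij : (Finset.univ.filter fun v :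
      ZMod (ℓ^2) × ZMod (ℓ^2) × ZMod (ℓ^2) × ZMod (ℓ^2) =>
        IsUnit v.1 ∧ v.2.2.1 * v.2.2.2 = v.2.1 * v.2.1).card
      = (Finset.univ.filter fun q :
      ZMod (ℓ^2) × ZMod (ℓ^2) × ZMod (ℓ^2) × ZMod (ℓ^2) =>
        IsUnit (dq q) ∧ discq q = 0).card := by
    apply Finset.card_nbij'
      (fun v => ((v.1 + v.2.1) * h, (v.2.2.1, (-(h * h) * v.2.2.2, (v.1 - v.2.1) * h))))
      (fun q => (q.1 + q.2.2.2, (q.1 - q.2.2.2, (q.2.1, -(4 * q.2.2.1)))))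
    · intro v hv
      simp only [Finset.mem_coe, Finset.mem_filter, Finset.mem_univ, true_and] at hv ⊢
      obtain ⟨hs, hw⟩ := hv
      constructor
      · have hdq : dq ((v.1 + v.2.1) * h, (v.2.2.1, (-(h * h) * v.2.2.2, (v.1 - v.2.1) * h)))
            = h * h * (v.1 * v.1) := by
          simp only [dq]
          linear_combination (h * h) * hw
        rw [hdq]
        exact (hu.mul hu).mul (hs.mul hs)
      · have hdisc : discq ((v.1 + v.2.1) * h, (v.2.2.1, (-(h * h) * v.2.2.2, (v.1 - v.2.1) * h)))
            = v.2.1 * v.2.1 - v.2.2.1 * v.2.2.2 := by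
          simp only [discq, dq]
          linear_combination ((2 * h + 1) * (v.2.1 * v.2.1 - v.2.2.1 * v.2.2.2)) * hh
        rw [hdisc, hw, sub_self]
    · intro q hq
      simp only [Finset.mem_coe, Finset.mem_filter, Finset.mem_univ, true_and] at hq ⊢
      obtain ⟨hdet, h0⟩ := hq
      simp only [discq, dq] at h0
      constructor
      · have hsq : (q.1 + q.2.2.2) * (q.1 + q.2.2.2) = 4 * dq q := by
          simp only [dq]
          linear_combination h0
        have hx : IsUnit ((q.1 + q.2.2.2) * (q.1 + q.2.2.2)) := by
          rw [hsq]; exact hfour.mul hdet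
        exact isUnit_of_mul_isUnit_left hx
      · show q.2.1 * -(4 * q.2.2.1) = (q.1 - q.2.2.2) * (q.1 - q.2.2.2)
        linear_combination (-1 : ZMod (ℓ^2)) * h0
    · intro v _
      simp only [Prod.ext_iff]
      refine ⟨?_, ?_, ?_, ?_⟩
      · show (v.1 + v.2.1) * h + (v.1 - v.2.1) * h = v.1
        linear_combination v.1 * hh
      · show (v.1 + v.2.1) * h - (v.1 - v.2.1) * h = v.2.1
        linear_combination v.2.1 * hh
      · trivial
      · show -(4 * (-(h * h) * v.2.2.2)) = v.2.2.2
        linear_combination ((2 * h + 1) * v.2.2.2) * hh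
    · intro q _
      simp only [Prod.ext_iff]
      refine ⟨?_, ?_, ?_, ?_⟩
      · show (q.1 + q.2.2.2 + (q.1 - q.2.2.2)) * h = q.1
        linear_combination q.1 * hh
      · trivial
      · show -(h * h) * -(4 * q.2.2.1) = q.2.2.1
        linear_combination ((2 * h + 1) * q.2.2.1) * hh
      · show (q.1 + q.2.2.2 - (q.1 - q.2.2.2)) * h = q.2.2.2
        linear_combination q.2.2.2 * hh
  rw [← hbij]
  have hsplit : (Finset.univ.filter fun v :
      ZMod (ℓ^2) × ZMod (ℓ^2) × ZMod (ℓ^2) × ZMod (ℓ^2) =>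
        IsUnit v.1 ∧ v.2.2.1 * v.2.2.2 = v.2.1 * v.2.1)
      = (Finset.univ.filter fun x : ZMod (ℓ^2) => IsUnit x) ×ˢ
        (Finset.univ.filter fun z : ZMod (ℓ^2) × ZMod (ℓ^2) × ZMod (ℓ^2) =>
          z.2.1 * z.2.2 = z.1 * z.1) := by
    ext v
    simp only [Finset.mem_filter, Finset.mem_univ, true_and, Finset.mem_product]
  rw [hsplit, Finset.card_product, card_isUnit ℓ, card_M ℓ]

end maincount

/-- for an odd prime `ℓ`, the number of `g ∈ GL₂(ℤ/ℓ²ℤ)` with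
`tr(g)² - 4 det(g) ≢ 0 (mod ℓ²)` equals
`(ℓ⁴-2ℓ²-ℓ+1)/(ℓ²(ℓ²-1)) · #GL₂(ℤ/ℓ²ℤ) = ℓ³(ℓ-1)(ℓ⁴-2ℓ²-ℓ+1)`. -/
theorem stmt17 (ℓ : ℕ) (hℓ : ℓ.Prime) (hℓ2 : ℓ ≠ 2) :
    (Nat.card {g : Matrix.GeneralLinearGroup (Fin 2) (ZMod (ℓ ^ 2)) //
        glDisc (ℓ ^ 2) g ≠ 0} : ℤ) =
      (ℓ : ℤ) ^ 3 * ((ℓ : ℤ) - 1) * ((ℓ : ℤ) ^ 4 - 2 * (ℓ : ℤ) ^ 2 - (ℓ : ℤ) + 1) ∧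
    (Nat.card {g : Matrix.GeneralLinearGroup (Fin 2) (ZMod (ℓ ^ 2)) //
        glDisc (ℓ ^ 2) g ≠ 0} : ℝ) =
      ((ℓ : ℝ) ^ 4 - 2 * (ℓ : ℝ) ^ 2 - (ℓ : ℝ) + 1) / ((ℓ : ℝ) ^ 2 * ((ℓ : ℝ) ^ 2 - 1)) *
        (Nat.card (Matrix.GeneralLinearGroup (Fin 2) (ZMod (ℓ ^ 2))) : ℝ) := by
  classical
  haveI : Fact ℓ.Prime := ⟨hℓ⟩
  -- total count of GL₂(ℤ/ℓ²)
  have hGL : Nat.card (Matrix.GeneralLinearGroup (Fin 2) (ZMod (ℓ ^ 2)))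
      = ℓ * (ℓ * (ℓ * ℓ)) * ((ℓ^2 - 1) * (ℓ^2 - ℓ)) := by
    have h1 := natCard_GL (S := ZMod (ℓ^2)) (fun _ => True)
    rw [Nat.card_congr (Equiv.subtypeUnivEquiv (fun _ => trivial))] at h1
    rw [h1, ← card_GL_quad ℓ]
    exact congrArg Finset.card (Finset.filter_congr fun q _ => by simp [dq])
  -- the good count, as a quadruple count
  have hgood : Nat.card {g : Matrix.GeneralLinearGroup (Fin 2) (ZMod (ℓ ^ 2)) //
        glDisc (ℓ ^ 2) g ≠ 0}
      = (Finset.univ.filter fun q :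
          ZMod (ℓ^2) × ZMod (ℓ^2) × ZMod (ℓ^2) × ZMod (ℓ^2) =>
            IsUnit (dq q) ∧ ¬ discq q = 0).card := by
    have h1 := natCard_GL (S := ZMod (ℓ^2))
      (fun A => ¬ (Matrix.trace A ^ 2 - 4 * Matrix.det A = 0))
    have hc : Nat.card {g : Matrix.GeneralLinearGroup (Fin 2) (ZMod (ℓ ^ 2)) //
          glDisc (ℓ ^ 2) g ≠ 0}
        = Nat.card {g : Matrix.GeneralLinearGroup (Fin 2) (ZMod (ℓ ^ 2)) //
          ¬ (Matrix.trace (g : Matrix (Fin 2) (Fin 2) (ZMod (ℓ^2))) ^ 2 -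
            4 * Matrix.det (g : Matrix (Fin 2) (Fin 2) (ZMod (ℓ^2))) = 0)} :=
      Nat.card_congr (Equiv.subtypeEquivRight (fun g => Iff.rfl))
    rw [hc, h1]
    refine congrArg Finset.card (Finset.filter_congr fun q _ => ?_)
    rw [trace_matOf, det_matOf]
    exact Iff.rfl
  -- splitting GL₂ by vanishing of the discriminant
  have hsplit : (Finset.univ.filter fun q :
        ZMod (ℓ^2) × ZMod (ℓ^2) × ZMod (ℓ^2) × ZMod (ℓ^2) =>
          IsUnit (dq q) ∧ discq q = 0).card
      + (Finset.univ.filter fun q :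
        ZMod (ℓ^2) × ZMod (ℓ^2) × ZMod (ℓ^2) × ZMod (ℓ^2) =>
          IsUnit (dq q) ∧ ¬ discq q = 0).card
      = (Finset.univ.filter fun q :
        ZMod (ℓ^2) × ZMod (ℓ^2) × ZMod (ℓ^2) × ZMod (ℓ^2) => IsUnit (dq q)).card := by
    have h2 := Finset.card_filter_add_card_filter_not
      (s := Finset.univ.filter fun q :
        ZMod (ℓ^2) × ZMod (ℓ^2) × ZMod (ℓ^2) × ZMod (ℓ^2) => IsUnit (dq q))
      (p := fun q => discq q = 0)
    rwa [Finset.filter_filter, Finset.filter_filter] at h2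
  set y := Nat.card {g : Matrix.GeneralLinearGroup (Fin 2) (ZMod (ℓ ^ 2)) //
        glDisc (ℓ ^ 2) g ≠ 0} with hy
  have key : (ℓ*(ℓ-1)) * ((ℓ*(ℓ-1)) * (ℓ*(ℓ-1)) + ℓ * (ℓ * (ℓ-1) + (ℓ^2 + (ℓ - 1) * ℓ))) + y
      = ℓ * (ℓ * (ℓ * ℓ)) * ((ℓ^2 - 1) * (ℓ^2 - ℓ)) := by
    rw [hgood, ← card_bad ℓ hℓ2, ← card_GL_quad ℓ]
    exact hsplit
  have h1le : 1 ≤ ℓ := hℓ.one_lt.le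
  have h2le : 1 ≤ ℓ^2 := Nat.one_le_pow _ _ hℓ.pos
  have h3le : ℓ ≤ ℓ^2 := Nat.le_self_pow two_ne_zero ℓ
  have keyZ : (y : ℤ) = (ℓ : ℤ) ^ 3 * ((ℓ : ℤ) - 1) *
      ((ℓ : ℤ) ^ 4 - 2 * (ℓ : ℤ) ^ 2 - (ℓ : ℤ) + 1) := by
    have := congrArg (fun n : ℕ => (n : ℤ)) key
    push_cast [Nat.cast_sub h1le, Nat.cast_sub h2le, Nat.cast_sub h3le] at this
    linarith [this]
  refine ⟨keyZ, ?_⟩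
  have keyR : (y : ℝ) = (ℓ : ℝ) ^ 3 * ((ℓ : ℝ) - 1) *
      ((ℓ : ℝ) ^ 4 - 2 * (ℓ : ℝ) ^ 2 - (ℓ : ℝ) + 1) := by
    exact_mod_cast congrArg (fun z : ℤ => (z : ℝ)) keyZ
  rw [keyR, hGL]
  have hl2 : (2 : ℝ) ≤ (ℓ : ℝ) := by exact_mod_cast hℓ.two_le
  have hne1 : (ℓ : ℝ) ≠ 0 := by positivity
  have hne2 : (ℓ : ℝ)^2 - 1 ≠ 0 := by nlinarith
  push_cast [Nat.cast_sub h1le, Nat.cast_sub h2le, Nat.cast_sub h3le]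
  field_simp
end
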